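/- arXiv:0902.4089 — 5 statements merged into one kernel-verified Lean document; each statement's English description precedes it below -/
import Mathlib

section
/- Let C = A × B where A and B are cyclic of order n > 1. For every element x of C of order n, there exists an element y of C of order n such that C is the internal direct product of ⟨x⟩ and ⟨y⟩ (i.e., ⟨x⟩ ∩ ⟨y⟩ = 1 and ⟨x⟩⟨y⟩ = C). -/
/-- `C = A × B`, the direct product of two cyclic groups of order `n`. -/
abbrev CycSq (n : ℕ) := Multiplicative (ZMod n) × Multiplicative (ZMod n)

theorem stmt_1 (n : ℕ) (hn : 1 < n) (x : CycSq n) (hx : orderOf x = n) :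
    ∃ y : CycSq n, orderOf y = n ∧
      Subgroup.zpowers x ⊓ Subgroup.zpowers y = ⊥ ∧
      Subgroup.zpowers x ⊔ Subgroup.zpowers y = ⊤ := by
  have hn0 : n ≠ 0 := by omega
  haveI : NeZero n := ⟨hn0⟩
  set a : ZMod n := Multiplicative.toAdd x.1 with ha
  set b : ZMod n := Multiplicative.toAdd x.2 with hb
  -- Step 1: find u v with u*a + v*b = 1
  have hval : ∀ c : ZMod n, ((c.val : ℕ) : ZMod n) = c := by
    intro c; simp [ZMod.natCast_val, ZMod.cast_id]
  set A : ℕ := a.val with hA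
  set B : ℕ := b.val with hB
  set d : ℕ := Nat.gcd A B with hd
  have hcop : Nat.Coprime d n := by
    by_contra hc
    set e : ℕ := Nat.gcd d n with he
    have hen : e ∣ n := Nat.gcd_dvd_right d n
    have heA : e ∣ A := (Nat.gcd_dvd_left d n).trans (Nat.gcd_dvd_left A B)
    have heB : e ∣ B := (Nat.gcd_dvd_left d n).trans (Nat.gcd_dvd_right A B)
    have hx1 : x ^ (n / e) = 1 := by
      have key : ∀ (c : ZMod n), e ∣ c.val → ((n / e) : ZMod n) * c = 0 := by
        intro c hec
        have : (((n / e) * c.val : ℕ) : ZMod n) = 0 := by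
          rw [ZMod.natCast_eq_zero_iff]
          obtain ⟨k, hk⟩ := hec
          refine ⟨k, ?_⟩
          rw [hk, ← mul_assoc, Nat.div_mul_cancel hen]
        rw [Nat.cast_mul, hval] at this
        exact this
      have h1 : (x ^ (n / e)).1 = 1 := by
        have := key a heA
        apply Multiplicative.toAdd.injective
        simp only [Prod.pow_fst, toAdd_pow, toAdd_one, ← ha]
        rw [nsmul_eq_mul, this]
      have h2 : (x ^ (n / e)).2 = 1 := by
        have := key b heB
        apply Multiplicative.toAdd.injective
        simp only [Prod.pow_snd, toAdd_pow, toAdd_one, ← hb]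
        rw [nsmul_eq_mul, this]
      exact Prod.ext h1 h2
    have hdvd : n ∣ n / e := by
      have := orderOf_dvd_of_pow_eq_one hx1
      rwa [hx] at this
    have hdvd2 : n / e ∣ n := Nat.div_dvd_of_dvd hen
    have hne : n / e = n := Nat.dvd_antisymm hdvd2 hdvd
    have he1 : e = 1 := by
      have : e * (n / e) = n := Nat.mul_div_cancel' hen
      rw [hne] at this
      have h1n : e * n = 1 * n := by rw [one_mul, this]
      exact Nat.eq_of_mul_eq_mul_right (by omega) h1n
    exact hc he1
  -- d is a unit in ZMod n, and d = A * gcdA + B * gcdB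
  set w : (ZMod n)ˣ := (ZMod.unitOfCoprime d hcop)⁻¹ with hw
  have hwd : (w : ZMod n) * (d : ZMod n) = 1 := by
    have : ((ZMod.unitOfCoprime d hcop : (ZMod n)ˣ) : ZMod n) = (d : ZMod n) :=
      ZMod.coe_unitOfCoprime d hcop
    rw [hw]
    calc ((ZMod.unitOfCoprime d hcop)⁻¹ : (ZMod n)ˣ) * (d : ZMod n)
        = ((ZMod.unitOfCoprime d hcop)⁻¹ : (ZMod n)ˣ) * (ZMod.unitOfCoprime d hcop : (ZMod n)ˣ) := by rw [this]
      _ = ((((ZMod.unitOfCoprime d hcop)⁻¹ * ZMod.unitOfCoprime d hcop) : (ZMod n)ˣ) : ZMod n) := by push_cast; ring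
      _ = 1 := by rw [inv_mul_cancel]; rfl
  have hbez : (d : ZMod n) = a * ((Nat.gcdA A B : ℤ) : ZMod n) + b * ((Nat.gcdB A B : ℤ) : ZMod n) := by
    have h := Nat.gcd_eq_gcd_ab A B
    have : ((d : ℤ) : ZMod n) = (((A : ℤ) * Nat.gcdA A B + (B : ℤ) * Nat.gcdB A B : ℤ) : ZMod n) := by
      exact_mod_cast congrArg (fun z : ℤ => ((z : ℤ) : ZMod n)) h
    push_cast at this
    rw [hval, hval] at this
    exact_mod_cast this
  obtain ⟨u, v, huv⟩ : ∃ u v : ZMod n, u * a + v * b = 1 := by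
    refine ⟨(w : ZMod n) * ((Nat.gcdA A B : ℤ) : ZMod n),
            (w : ZMod n) * ((Nat.gcdB A B : ℤ) : ZMod n), ?_⟩
    calc (w : ZMod n) * ((Nat.gcdA A B : ℤ) : ZMod n) * a
          + (w : ZMod n) * ((Nat.gcdB A B : ℤ) : ZMod n) * b
        = (w : ZMod n) * (a * ((Nat.gcdA A B : ℤ) : ZMod n) + b * ((Nat.gcdB A B : ℤ) : ZMod n)) := by ring
      _ = (w : ZMod n) * (d : ZMod n) := by rw [← hbez]
      _ = 1 := hwd
  -- Define y
  refine ⟨(Multiplicative.ofAdd (-v), Multiplicative.ofAdd u), ?_, ?_, ?_⟩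
  · -- orderOf y = n
    set y : CycSq n := (Multiplicative.ofAdd (-v), Multiplicative.ofAdd u) with hy
    have hyn : y ^ n = 1 := by
      apply Prod.ext <;>
      · apply Multiplicative.toAdd.injective
        simp [hy, nsmul_eq_mul, ZMod.natCast_self]
    have h1 : orderOf y ∣ n := orderOf_dvd_of_pow_eq_one hyn
    have h2 : n ∣ orderOf y := by
      set m := orderOf y with hm
      have hym : y ^ m = 1 := pow_orderOf_eq_one y
      have hv' : (m : ZMod n) * (-v) = 0 := by
        have := congrArg (fun z : CycSq n => Multiplicative.toAdd z.1) hym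
        simpa [hy, nsmul_eq_mul] using this
      have hu' : (m : ZMod n) * u = 0 := by
        have := congrArg (fun z : CycSq n => Multiplicative.toAdd z.2) hym
        simpa [hy, nsmul_eq_mul] using this
      have : (m : ZMod n) = 0 := by
        calc (m : ZMod n) = (m : ZMod n) * (u * a + v * b) := by rw [huv, mul_one]
          _ = a * ((m : ZMod n) * u) + b * (-((m : ZMod n) * (-v))) := by ring
          _ = 0 := by rw [hu', hv']; ring
      exact (ZMod.natCast_eq_zero_iff m n).mp this
    exact Nat.dvd_antisymm h1 h2
  · -- inf = ⊥
    set y : CycSq n := (Multiplicative.ofAdd (-v), Multiplicative.ofAdd u) with hy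
    rw [eq_bot_iff]
    rintro z ⟨⟨k, hk⟩, ⟨l, hl⟩⟩
    have hk1 : (k : ZMod n) * a = Multiplicative.toAdd z.1 := by
      have := congrArg (fun t : CycSq n => Multiplicative.toAdd t.1) hk
      simpa [zsmul_eq_mul, ← ha] using this
    have hk2 : (k : ZMod n) * b = Multiplicative.toAdd z.2 := by
      have := congrArg (fun t : CycSq n => Multiplicative.toAdd t.2) hk
      simpa [zsmul_eq_mul, ← hb] using this
    have hl1 : (l : ZMod n) * (-v) = Multiplicative.toAdd z.1 := by
      have := congrArg (fun t : CycSq n => Multiplicative.toAdd t.1) hl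
      simpa [hy, zsmul_eq_mul] using this
    have hl2 : (l : ZMod n) * u = Multiplicative.toAdd z.2 := by
      have := congrArg (fun t : CycSq n => Multiplicative.toAdd t.2) hl
      simpa [hy, zsmul_eq_mul] using this
    have hK : (k : ZMod n) = 0 := by
      calc (k : ZMod n) = (k : ZMod n) * (u * a + v * b) := by rw [huv, mul_one]
        _ = u * ((k : ZMod n) * a) + v * ((k : ZMod n) * b) := by ring
        _ = u * ((l : ZMod n) * (-v)) + v * ((l : ZMod n) * u) := by rw [hk1, hk2, hl1, hl2]
        _ = 0 := by ring
    have hz1 : Multiplicative.toAdd z.1 = 0 := by rw [← hk1, hK, zero_mul]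
    have hz2 : Multiplicative.toAdd z.2 = 0 := by rw [← hk2, hK, zero_mul]
    have : z = 1 := by
      apply Prod.ext <;> apply Multiplicative.toAdd.injective <;> simpa
    simp [this]
  · -- sup = ⊤
    set y : CycSq n := (Multiplicative.ofAdd (-v), Multiplicative.ofAdd u) with hy
    rw [eq_top_iff]
    rintro z -
    set s : ZMod n := Multiplicative.toAdd z.1 with hs
    set t : ZMod n := Multiplicative.toAdd z.2 with ht
    set k : ZMod n := u * s + v * t with hkdef
    set l : ZMod n := a * t - b * s with hldef
    have hzeq : z = x ^ k.val * y ^ l.val := by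
      apply Prod.ext <;> apply Multiplicative.toAdd.injective
      · show s = Multiplicative.toAdd ((x ^ k.val * y ^ l.val).1)
        have : Multiplicative.toAdd ((x ^ k.val * y ^ l.val).1)
            = (k.val : ZMod n) * a + (l.val : ZMod n) * (-v) := by
          simp [hy, nsmul_eq_mul, ← ha]
        rw [this, hval, hval, hkdef, hldef]
        have : (u * s + v * t) * a + (a * t - b * s) * (-v)
            = s * (u * a + v * b) := by ring
        rw [this, huv, mul_one]
      · show t = Multiplicative.toAdd ((x ^ k.val * y ^ l.val).2)
        have : Multiplicative.toAdd ((x ^ k.val * y ^ l.val).2)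
            = (k.val : ZMod n) * b + (l.val : ZMod n) * u := by
          simp [hy, nsmul_eq_mul, ← hb]
        rw [this, hval, hval, hkdef, hldef]
        have : (u * s + v * t) * b + (a * t - b * s) * u
            = t * (u * a + v * b) := by ring
        rw [this, huv, mul_one]
    rw [hzeq]
    exact mul_mem (Subgroup.mem_sup_left (Subgroup.pow_mem _ (Subgroup.mem_zpowers x) _))
      (Subgroup.mem_sup_right (Subgroup.pow_mem _ (Subgroup.mem_zpowers y) _))
end

section
/- Let G = C_{n_1} × ... × C_{n_k} with 1 < n_1 | n_2 | ... | n_k, let p be a prime such that p^t exactly divides n_k/n_{k-1} with t ≥ 1 (with the convention n_0 = 1 if k = 1), and let A_p be the unique subgroup of order p^t of the last factor C_{n_k}. Then for a subgroup H of G, the exponent of G/H divides n_k/p^t if and only if H contains A_p. -/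
/-- The abelian group with invariant factors `n 0 ∣ n 1 ∣ ... ∣ n (k-1)`. -/
abbrev IG (k : ℕ) (n : Fin k → ℕ) := ∀ i : Fin k, Multiplicative (ZMod (n i))

/-- The canonical generator of the `i`-th cyclic factor. -/
abbrev gen (k : ℕ) (n : Fin k → ℕ) (i : Fin k) : IG k n :=
  Pi.mulSingle i (Multiplicative.ofAdd (1 : ZMod (n i)))

lemma helper5 (k : ℕ) (n : Fin k → ℕ) (K1 : Fin k) (e : ℕ)
    (hK1 : ∀ i, i ≠ K1 → n i ∣ e) [NeZero (n K1)]
    (H : Subgroup (IG k n)) :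
    Monoid.exponent (IG k n ⧸ H) ∣ e ↔ Subgroup.zpowers (gen k n K1 ^ e) ≤ H := by
  have key : ∀ x : IG k n, x ^ e = (gen k n K1 ^ e) ^ (Multiplicative.toAdd (x K1)).val := by
    intro x
    funext i
    simp only [Pi.pow_apply, gen]
    by_cases hi : i = K1
    · subst hi
      rw [Pi.mulSingle_eq_same]
      apply Multiplicative.toAdd.injective
      rw [toAdd_pow, toAdd_pow, toAdd_pow, toAdd_ofAdd]
      rw [nsmul_eq_mul, nsmul_eq_mul, nsmul_eq_mul]
      rw [ZMod.natCast_zmod_val]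
      ring
    · rw [Pi.mulSingle_eq_of_ne hi, one_pow, one_pow]
      apply Multiplicative.toAdd.injective
      rw [toAdd_pow, toAdd_one, nsmul_eq_mul]
      rw [(ZMod.natCast_eq_zero_iff e (n i)).mpr (hK1 i hi), zero_mul]
  rw [Monoid.exponent_dvd_iff_forall_pow_eq_one, Subgroup.zpowers_le]
  constructor
  · intro h
    have := h (QuotientGroup.mk (gen k n K1))
    rw [← QuotientGroup.mk_pow, QuotientGroup.eq_one_iff] at this
    exact this
  · intro h x
    obtain ⟨x, rfl⟩ := QuotientGroup.mk_surjective x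
    rw [← QuotientGroup.mk_pow, QuotientGroup.eq_one_iff, key x]
    exact pow_mem h _

theorem stmt_5 (k : ℕ) (hk : 2 ≤ k) (n : Fin k → ℕ)
    (h1 : ∀ i, 1 < n i) (hdvd : ∀ i j : Fin k, i ≤ j → n i ∣ n j)
    (p t : ℕ) (hp : p.Prime) (ht : 1 ≤ t)
    (hpt : p ^ t ∣ n ⟨k - 1, by omega⟩ / n ⟨k - 2, by omega⟩)
    (hpt' : ¬ p ^ (t + 1) ∣ n ⟨k - 1, by omega⟩ / n ⟨k - 2, by omega⟩)
    (H : Subgroup (IG k n)) :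
    Monoid.exponent (IG k n ⧸ H) ∣ n ⟨k - 1, by omega⟩ / p ^ t ↔
      Subgroup.zpowers
        (gen k n ⟨k - 1, by omega⟩ ^ (n ⟨k - 1, by omega⟩ / p ^ t)) ≤ H := by
  have hb1 : k - 1 < k := by omega
  have hb2 : k - 2 < k := by omega
  haveI : NeZero (n ⟨k - 1, hb1⟩) := ⟨by have := h1 ⟨k - 1, hb1⟩; omega⟩
  have hMN : n ⟨k - 2, hb2⟩ ∣ n ⟨k - 1, hb1⟩ :=
    hdvd _ _ (by simp only [Fin.mk_le_mk]; omega)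
  have hptN : p ^ t ∣ n ⟨k - 1, hb1⟩ := Dvd.dvd.trans hpt (Nat.div_dvd_of_dvd hMN)
  have hMe : n ⟨k - 2, hb2⟩ ∣ n ⟨k - 1, hb1⟩ / p ^ t := by
    rw [Nat.dvd_div_iff_mul_dvd hptN]
    rw [mul_comm]
    calc n ⟨k - 2, hb2⟩ * p ^ t ∣ n ⟨k - 2, hb2⟩ * (n ⟨k - 1, hb1⟩ / n ⟨k - 2, hb2⟩) :=
          mul_dvd_mul_left _ hpt
    _ = n ⟨k - 1, hb1⟩ := Nat.mul_div_cancel' hMN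
  refine helper5 k n ⟨k - 1, hb1⟩ _ (fun i hi => ?_) H
  refine (hdvd i ⟨k - 2, hb2⟩ ?_).trans hMe
  have h2 : i.val < k := i.isLt
  have h3 : i.val ≠ k - 1 := fun h => hi (Fin.ext h)
  simp only [Fin.mk_le_mk, Fin.le_def]; omega
end

section
/- Let G = C_{n_1} × ... × C_{n_k} with 1 < n_1 | n_2 | ... | n_k, k ≥ 2, and suppose n_{k-1} = n_k. Then there exists a family {H_i}_{i∈I} of subgroups of G such that: (i) ∩_i H_i = 1, (ii) ∪_i H_i = G (the subgroups cover G), (iii) G/H_i ≅ G/H_j for all i, j, and (iv) H_i ≅ H_j for all i, j. -/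
noncomputable def emb (a b : ℕ) (h : a ∣ b) : ZMod a →+ ZMod b :=
  ZMod.lift a ⟨zmultiplesHom (ZMod b) ((b / a : ℕ) : ZMod b), by
    show (a : ℤ) • ((b / a : ℕ) : ZMod b) = 0
    rw [natCast_zsmul, nsmul_eq_mul, ← Nat.cast_mul, Nat.mul_div_cancel' h, ZMod.natCast_self]⟩

lemma emb_apply (a b : ℕ) [NeZero a] (h : a ∣ b) (x : ZMod a) :
    emb a b h x = ((x.val * (b / a) : ℕ) : ZMod b) := by
  have hx : ((x.val : ℤ) : ZMod a) = x := by push_cast [ZMod.natCast_val, ZMod.cast_id]; rfl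
  conv_lhs => rw [← hx]
  rw [emb, ZMod.lift_coe]
  show (x.val : ℤ) • ((b / a : ℕ) : ZMod b) = _
  rw [natCast_zsmul, nsmul_eq_mul, ← Nat.cast_mul]

lemma emb_eq_zero (a b : ℕ) [NeZero a] [NeZero b] (h : a ∣ b) (x : ZMod a)
    (hx : emb a b h x = 0) : x = 0 := by
  rw [emb_apply, ZMod.natCast_eq_zero_iff] at hx
  have hba : 0 < b / a := Nat.div_pos (Nat.le_of_dvd (Nat.pos_of_ne_zero (NeZero.ne b)) h)
    (Nat.pos_of_ne_zero (NeZero.ne a))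
  have h2 : a * (b / a) ∣ x.val * (b / a) := by rwa [Nat.mul_div_cancel' h]
  have h3 : a ∣ x.val := (Nat.mul_dvd_mul_iff_right hba).mp h2
  have h4 : x.val = 0 := Nat.eq_zero_of_dvd_of_lt h3 (ZMod.val_lt x) |>.symm ▸ rfl
  rwa [← ZMod.val_eq_zero]

lemma emb_self (a b : ℕ) [NeZero a] (hab : a = b) (h : a ∣ b) (x : ZMod a) :
    emb a b h x = ((x.val : ℕ) : ZMod b) := by
  subst hab
  rw [emb_apply, Nat.div_self (Nat.pos_of_ne_zero (NeZero.ne a)), mul_one]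

lemma emb_emb_self (a b : ℕ) [NeZero a] [NeZero b] (hab : a = b) (h : a ∣ b) (h' : b ∣ a)
    (x : ZMod a) : emb b a h' (emb a b h x) = x := by
  rw [emb_self a b hab h, emb_self b a hab.symm h']
  have hlt : x.val < b := hab ▸ ZMod.val_lt x
  rw [ZMod.val_natCast_of_lt hlt]
  push_cast [ZMod.natCast_val, ZMod.cast_id]; rfl

section Main

variable {k : ℕ} {n : Fin k → ℕ} (p q : Fin k)
  (hq : ∀ i, n i ∣ n q) (hp : n q ∣ n p)

/-- the `p`-coordinate, pushed into `ZMod (n q)` -/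
noncomputable def XX (g : IG k n) : ZMod (n q) := emb (n p) (n q) (hq p) (g p).toAdd

/-- the `q`-coordinate -/
def YY (g : IG k n) : ZMod (n q) := (g q).toAdd

/-- the twisted part from the other coordinates -/
noncomputable def WW (c : Fin k → ZMod (n q)) (g : IG k n) : ZMod (n q) :=
  ∑ i ∈ (Finset.univ.erase p).erase q, c i * emb (n i) (n q) (hq i) (g i).toAdd

noncomputable def sigmaFun (a b u v : ZMod (n q)) (c : Fin k → ZMod (n q)) (g : IG k n) :
    IG k n :=
  Function.update
    (Function.update g p
      (Multiplicative.ofAdd (emb (n q) (n p) hp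
        (b * XX p q hq g + u * YY q g - u * WW p q hq c g))))
    q (Multiplicative.ofAdd (-a * XX p q hq g + v * YY q g - v * WW p q hq c g))

noncomputable def tauFun (a b u v : ZMod (n q)) (c : Fin k → ZMod (n q)) (g : IG k n) :
    IG k n :=
  Function.update
    (Function.update g p
      (Multiplicative.ofAdd (emb (n q) (n p) hp
        (v * XX p q hq g - u * YY q g))))
    q (Multiplicative.ofAdd (a * XX p q hq g + b * YY q g + WW p q hq c g))

variable (a b u v : ZMod (n q)) (c : Fin k → ZMod (n q)) (g h : IG k n)

lemma sigma_apply_q :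
    sigmaFun p q hq hp a b u v c g q
      = Multiplicative.ofAdd (-a * XX p q hq g + v * YY q g - v * WW p q hq c g) := by
  simp [sigmaFun]

lemma sigma_apply_p (hpq : p ≠ q) :
    sigmaFun p q hq hp a b u v c g p
      = Multiplicative.ofAdd (emb (n q) (n p) hp
          (b * XX p q hq g + u * YY q g - u * WW p q hq c g)) := by
  simp [sigmaFun, Function.update_of_ne hpq]

lemma sigma_apply_other (i : Fin k) (hip : i ≠ p) (hiq : i ≠ q) :
    sigmaFun p q hq hp a b u v c g i = g i := by
  simp [sigmaFun, Function.update_of_ne hip, Function.update_of_ne hiq]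

lemma tau_apply_q :
    tauFun p q hq hp a b u v c g q
      = Multiplicative.ofAdd (a * XX p q hq g + b * YY q g + WW p q hq c g) := by
  simp [tauFun]

lemma tau_apply_p (hpq : p ≠ q) :
    tauFun p q hq hp a b u v c g p
      = Multiplicative.ofAdd (emb (n q) (n p) hp
          (v * XX p q hq g - u * YY q g)) := by
  simp [tauFun, Function.update_of_ne hpq]

lemma tau_apply_other (i : Fin k) (hip : i ≠ p) (hiq : i ≠ q) :
    tauFun p q hq hp a b u v c g i = g i := by
  simp [tauFun, Function.update_of_ne hip, Function.update_of_ne hiq]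


lemma XX_sigma (hpq : p ≠ q) (hnp : n p = n q) (h0 : ∀ i, n i ≠ 0) :
    XX p q hq (sigmaFun p q hq hp a b u v c g)
      = b * XX p q hq g + u * YY q g - u * WW p q hq c g := by
  haveI : NeZero (n p) := ⟨h0 p⟩
  haveI : NeZero (n q) := ⟨h0 q⟩
  rw [XX, sigma_apply_p p q hq hp a b u v c g hpq, toAdd_ofAdd, emb_emb_self _ _ hnp.symm]

lemma YY_sigma :
    YY q (sigmaFun p q hq hp a b u v c g)
      = -a * XX p q hq g + v * YY q g - v * WW p q hq c g := by
  rw [YY, sigma_apply_q p q hq hp, toAdd_ofAdd]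

lemma WW_sigma :
    WW p q hq c (sigmaFun p q hq hp a b u v c g) = WW p q hq c g := by
  refine Finset.sum_congr rfl fun i hi => ?_
  obtain ⟨hiq, hip⟩ : i ≠ q ∧ i ≠ p := by
    simp only [Finset.mem_erase, Finset.mem_univ, and_true] at hi; tauto
  rw [sigma_apply_other p q hq hp a b u v c g i hip hiq]

lemma XX_tau (hpq : p ≠ q) (hnp : n p = n q) (h0 : ∀ i, n i ≠ 0) :
    XX p q hq (tauFun p q hq hp a b u v c g)
      = v * XX p q hq g - u * YY q g := by
  haveI : NeZero (n p) := ⟨h0 p⟩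
  haveI : NeZero (n q) := ⟨h0 q⟩
  rw [XX, tau_apply_p p q hq hp a b u v c g hpq, toAdd_ofAdd, emb_emb_self _ _ hnp.symm]

lemma YY_tau :
    YY q (tauFun p q hq hp a b u v c g)
      = a * XX p q hq g + b * YY q g + WW p q hq c g := by
  rw [YY, tau_apply_q p q hq hp, toAdd_ofAdd]

lemma WW_tau :
    WW p q hq c (tauFun p q hq hp a b u v c g) = WW p q hq c g := by
  refine Finset.sum_congr rfl fun i hi => ?_
  obtain ⟨hiq, hip⟩ : i ≠ q ∧ i ≠ p := by
    simp only [Finset.mem_erase, Finset.mem_univ, and_true] at hi; tauto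
  rw [tau_apply_other p q hq hp a b u v c g i hip hiq]


lemma XX_mul : XX p q hq (g * h) = XX p q hq g + XX p q hq h := by
  simp [XX, Pi.mul_apply, toAdd_mul, map_add]

lemma YY_mul : YY q (g * h) = YY q g + YY q h := by
  simp [YY, Pi.mul_apply, toAdd_mul]

lemma WW_mul : WW p q hq c (g * h) = WW p q hq c g + WW p q hq c h := by
  simp [WW, Pi.mul_apply, toAdd_mul, map_add, mul_add, Finset.sum_add_distrib]

lemma tau_sigma (hpq : p ≠ q) (hnp : n p = n q) (h0 : ∀ i, n i ≠ 0)
    (huv : u * a + v * b = 1) :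
    tauFun p q hq hp a b u v c (sigmaFun p q hq hp a b u v c g) = g := by
  funext i
  rcases eq_or_ne i q with h | hiq
  · rw [h, tau_apply_q, XX_sigma p q hq hp a b u v c g hpq hnp h0,
      YY_sigma p q hq hp a b u v c g, WW_sigma p q hq hp a b u v c g,
      show a * (b * XX p q hq g + u * YY q g - u * WW p q hq c g)
          + b * (-a * XX p q hq g + v * YY q g - v * WW p q hq c g)
          + WW p q hq c g = YY q g from by
        linear_combination (YY q g - WW p q hq c g) * huv]
    exact ofAdd_toAdd (g q)
  rcases eq_or_ne i p with h | hip
  · rw [h, tau_apply_p p q hq hp a b u v c _ hpq, XX_sigma p q hq hp a b u v c g hpq hnp h0,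
      YY_sigma p q hq hp a b u v c g,
      show v * (b * XX p q hq g + u * YY q g - u * WW p q hq c g)
          - u * (-a * XX p q hq g + v * YY q g - v * WW p q hq c g) = XX p q hq g from by
        linear_combination XX p q hq g * huv]
    haveI : NeZero (n p) := ⟨h0 p⟩
    haveI : NeZero (n q) := ⟨h0 q⟩
    rw [XX, emb_emb_self _ _ hnp]
    exact ofAdd_toAdd (g p)
  · rw [tau_apply_other p q hq hp a b u v c _ i hip hiq,
      sigma_apply_other p q hq hp a b u v c g i hip hiq]

lemma sigma_tau (hpq : p ≠ q) (hnp : n p = n q) (h0 : ∀ i, n i ≠ 0)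
    (huv : u * a + v * b = 1) :
    sigmaFun p q hq hp a b u v c (tauFun p q hq hp a b u v c g) = g := by
  funext i
  rcases eq_or_ne i q with h | hiq
  · rw [h, sigma_apply_q, XX_tau p q hq hp a b u v c g hpq hnp h0,
      YY_tau p q hq hp a b u v c g, WW_tau p q hq hp a b u v c g,
      show -a * (v * XX p q hq g - u * YY q g)
          + v * (a * XX p q hq g + b * YY q g + WW p q hq c g)
          - v * WW p q hq c g = YY q g from by
        linear_combination YY q g * huv]
    exact ofAdd_toAdd (g q)
  rcases eq_or_ne i p with h | hip
  · rw [h, sigma_apply_p p q hq hp a b u v c _ hpq, XX_tau p q hq hp a b u v c g hpq hnp h0,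
      YY_tau p q hq hp a b u v c g, WW_tau p q hq hp a b u v c g,
      show b * (v * XX p q hq g - u * YY q g)
          + u * (a * XX p q hq g + b * YY q g + WW p q hq c g)
          - u * WW p q hq c g = XX p q hq g from by
        linear_combination XX p q hq g * huv]
    haveI : NeZero (n p) := ⟨h0 p⟩
    haveI : NeZero (n q) := ⟨h0 q⟩
    rw [XX, emb_emb_self _ _ hnp]
    exact ofAdd_toAdd (g p)
  · rw [sigma_apply_other p q hq hp a b u v c _ i hip hiq,
      tau_apply_other p q hq hp a b u v c g i hip hiq]

lemma sigma_mul (hpq : p ≠ q) :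
    sigmaFun p q hq hp a b u v c (g * h)
      = sigmaFun p q hq hp a b u v c g * sigmaFun p q hq hp a b u v c h := by
  funext i
  rcases eq_or_ne i q with hh | hiq
  · rw [hh, Pi.mul_apply, sigma_apply_q, sigma_apply_q, sigma_apply_q,
      XX_mul p q hq, YY_mul q, WW_mul p q hq, ← ofAdd_add]
    ring_nf
  rcases eq_or_ne i p with hh | hip
  · rw [hh, Pi.mul_apply, sigma_apply_p p q hq hp a b u v c _ hpq,
      sigma_apply_p p q hq hp a b u v c _ hpq, sigma_apply_p p q hq hp a b u v c _ hpq,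
      XX_mul p q hq, YY_mul q, WW_mul p q hq, ← ofAdd_add, ← map_add]
    ring_nf
  · rw [Pi.mul_apply, sigma_apply_other p q hq hp a b u v c _ i hip hiq,
      sigma_apply_other p q hq hp a b u v c g i hip hiq,
      sigma_apply_other p q hq hp a b u v c h i hip hiq, Pi.mul_apply]

noncomputable def sigmaEquiv (hpq : p ≠ q) (hnp : n p = n q) (h0 : ∀ i, n i ≠ 0)
    (huv : u * a + v * b = 1) : IG k n ≃* IG k n where
  toFun := sigmaFun p q hq hp a b u v c
  invFun := tauFun p q hq hp a b u v c
  left_inv g := tau_sigma p q hq hp a b u v c g hpq hnp h0 huv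
  right_inv g := sigma_tau p q hq hp a b u v c g hpq hnp h0 huv
  map_mul' g h := sigma_mul p q hq hp a b u v c g h hpq


lemma WW_eq_zero' (hc : ∀ i, i ≠ p → i ≠ q → c i = 0) : WW p q hq c g = 0 := by
  refine Finset.sum_eq_zero fun i hi => ?_
  obtain ⟨hiq, hip⟩ : i ≠ q ∧ i ≠ p := by
    simp only [Finset.mem_erase, Finset.mem_univ, and_true] at hi; tauto
  rw [hc i hip hiq, zero_mul]

lemma WW_eq_single (i₀ : Fin k) (hip : i₀ ≠ p) (hiq : i₀ ≠ q)
    (hc : ∀ i, i ≠ p → i ≠ q → i ≠ i₀ → c i = 0) :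
    WW p q hq c g = c i₀ * emb (n i₀) (n q) (hq i₀) (g i₀).toAdd := by
  refine Finset.sum_eq_single_of_mem i₀ (by simp [Finset.mem_erase, hip, hiq]) ?_
  intro j hj hne
  obtain ⟨hjq, hjp⟩ : j ≠ q ∧ j ≠ p := by
    simp only [Finset.mem_erase, Finset.mem_univ, and_true] at hj; tauto
  rw [hc j hjp hjq hne, zero_mul]

noncomputable def chiHom (c : Fin k → ZMod (n q)) : IG k n →* Multiplicative (ZMod (n q)) :=
  MonoidHom.mk' (fun g => Multiplicative.ofAdd (c p * XX p q hq g + c q * YY q g + WW p q hq c g))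
    (fun g h => by
      rw [XX_mul p q hq, YY_mul q, WW_mul p q hq, ← ofAdd_add]
      ring_nf)

def H0 : Subgroup (IG k n) := (Pi.evalMonoidHom (fun i => Multiplicative (ZMod (n i))) q).ker

lemma map_sigma (hpq : p ≠ q) (hnp : n p = n q) (h0 : ∀ i, n i ≠ 0)
    (huv : u * c p + v * c q = 1) :
    Subgroup.map (sigmaEquiv p q hq hp (c p) (c q) u v c hpq hnp h0 huv).toMonoidHom
        (H0 (n := n) q) = (chiHom p q hq c).ker := by
  ext g
  simp only [Subgroup.mem_map_equiv, H0, MonoidHom.mem_ker]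
  show (tauFun p q hq hp (c p) (c q) u v c g) q = 1 ↔ _
  rw [tau_apply_q]
  exact Iff.rfl

end Main

lemma exists_ab (m : ℕ) [NeZero m] (x y : ZMod m) :
    ∃ a b : ZMod m, IsCoprime a b ∧ a * x + b * y = 0 := by
  have hx : ((x.val : ℕ) : ZMod m) = x := by push_cast [ZMod.natCast_val, ZMod.cast_id]; rfl
  have hy : ((y.val : ℕ) : ZMod m) = y := by push_cast [ZMod.natCast_val, ZMod.cast_id]; rfl
  rcases Nat.eq_zero_or_pos (Nat.gcd x.val y.val) with hd | hd
  · have hx0 : x = 0 := by rw [← hx, Nat.eq_zero_of_gcd_eq_zero_left hd]; simp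
    have hy0 : y = 0 := by rw [← hy, Nat.eq_zero_of_gcd_eq_zero_right hd]; simp
    exact ⟨1, 0, isCoprime_one_left, by rw [hx0, hy0]; ring⟩
  · set d := Nat.gcd x.val y.val with hdd
    set X0 := x.val / d with hX0
    set Y0 := y.val / d with hY0
    have hcop : Nat.Coprime X0 Y0 := Nat.coprime_div_gcd_div_gcd hd
    have hxe : X0 * d = x.val := Nat.div_mul_cancel (Nat.gcd_dvd_left _ _)
    have hye : Y0 * d = y.val := Nat.div_mul_cancel (Nat.gcd_dvd_right _ _)
    have hint : IsCoprime ((X0 : ℕ) : ℤ) ((Y0 : ℕ) : ℤ) :=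
      Nat.isCoprime_iff_coprime.mpr hcop
    have hzmod : IsCoprime ((X0 : ℕ) : ZMod m) ((Y0 : ℕ) : ZMod m) := by
      have := hint.map (Int.castRingHom (ZMod m))
      simpa only [Int.coe_castRingHom, Int.cast_natCast] using this
    have hnat : Y0 * x.val = X0 * y.val := by
      rw [← hxe, ← hye]; ring
    refine ⟨((Y0 : ℕ) : ZMod m), -((X0 : ℕ) : ZMod m),
      hzmod.symm.neg_right, ?_⟩
    have : ((Y0 : ℕ) : ZMod m) * x = ((X0 : ℕ) : ZMod m) * y := by
      rw [← hx, ← hy, ← Nat.cast_mul, ← Nat.cast_mul, hnat]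
    rw [this]; ring

theorem stmt_6 (k : ℕ) (hk : 2 ≤ k) (n : Fin k → ℕ)
    (h1 : ∀ i, 1 < n i) (hdvd : ∀ i j : Fin k, i ≤ j → n i ∣ n j)
    (heq : n ⟨k - 2, by omega⟩ = n ⟨k - 1, by omega⟩) :
    ∃ (I : Type) (H : I → Subgroup (IG k n)),
      (⨅ i, H i) = ⊥ ∧
      (⋃ i, (H i : Set (IG k n))) = Set.univ ∧
      (∀ i j : I, Nonempty ((IG k n ⧸ H i) ≃* (IG k n ⧸ H j))) ∧
      (∀ i j : I, Nonempty (H i ≃* H j)) := by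
  have hk1 : k - 2 < k := by omega
  have hk2 : k - 1 < k := by omega
  set p : Fin k := ⟨k - 2, hk1⟩ with hpdef
  set q : Fin k := ⟨k - 1, hk2⟩ with hqdef
  have hnp : n p = n q := heq
  have hpq : p ≠ q := by
    simp only [hpdef, hqdef, ne_eq, Fin.mk.injEq]
    omega
  have hq : ∀ i, n i ∣ n q := fun i => hdvd i q (by
    have := i.2
    simp only [hqdef, Fin.le_def]
    omega)
  have hp : n q ∣ n p := dvd_of_eq hnp.symm
  have h0 : ∀ i, n i ≠ 0 := fun i => by have := h1 i; omega
  haveI : NeZero (n q) := ⟨h0 q⟩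
  refine ⟨{c : Fin k → ZMod (n q) // IsCoprime (c p) (c q)},
    fun c => (chiHom p q hq c.1).ker, ?_, ?_, ?_, ?_⟩
  · -- trivial intersection
    rw [eq_bot_iff]
    intro g hg
    rw [Subgroup.mem_iInf] at hg
    have memq : ∀ (c : Fin k → ZMod (n q)), IsCoprime (c p) (c q) →
        c p * XX p q hq g + c q * YY q g + WW p q hq c g = 0 := by
      intro c hc
      have h := hg ⟨c, hc⟩
      rw [MonoidHom.mem_ker] at h
      have h2 : Multiplicative.ofAdd
          (c p * XX p q hq g + c q * YY q g + WW p q hq c g) = 1 := h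
      exact ofAdd_eq_one.mp h2
    have hYq : YY q g = 0 := by
      have e1 : (fun j => if j = q then (1 : ZMod (n q)) else 0) p = 0 := if_neg hpq
      have e2 : (fun j => if j = q then (1 : ZMod (n q)) else 0) q = 1 := if_pos rfl
      have h := memq (fun j => if j = q then (1 : ZMod (n q)) else 0)
        (by rw [if_neg hpq, if_pos rfl]; exact isCoprime_zero_left.mpr isUnit_one)
      rw [WW_eq_zero' p q hq _ g (fun i _ hiq => if_neg hiq), if_neg hpq, if_pos rfl] at h
      linear_combination h
    have hXp : XX p q hq g = 0 := by
      have e1 : (fun j => if j = p then (1 : ZMod (n q)) else 0) p = 1 := if_pos rfl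
      have e2 : (fun j => if j = p then (1 : ZMod (n q)) else 0) q = 0 := if_neg (Ne.symm hpq)
      have h := memq (fun j => if j = p then (1 : ZMod (n q)) else 0)
        (by rw [if_pos rfl, if_neg (Ne.symm hpq)]; exact isCoprime_one_left)
      rw [WW_eq_zero' p q hq _ g (fun i hip _ => if_neg hip), if_pos rfl, if_neg (Ne.symm hpq)] at h
      linear_combination h
    rw [Subgroup.mem_bot]
    funext i
    rcases eq_or_ne i q with h | hiq
    · rw [h]
      have h3 : (g q).toAdd = 0 := hYq
      rw [← ofAdd_toAdd (g q), h3, ofAdd_zero]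
      rfl
    rcases eq_or_ne i p with h | hip
    · rw [h]
      haveI : NeZero (n p) := ⟨h0 p⟩
      have h3 : (g p).toAdd = 0 := emb_eq_zero _ _ (hq p) _ hXp
      rw [← ofAdd_toAdd (g p), h3, ofAdd_zero]
      rfl
    · have e1 : (fun j => if j = i then (1 : ZMod (n q)) else if j = q then 1 else 0) p = 0 := by
        show (if p = i then (1 : ZMod (n q)) else if p = q then 1 else 0) = 0
        rw [if_neg (Ne.symm hip), if_neg hpq]
      have e2 : (fun j => if j = i then (1 : ZMod (n q)) else if j = q then 1 else 0) q = 1 := by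
        show (if q = i then (1 : ZMod (n q)) else if q = q then 1 else 0) = 1
        rw [if_neg (Ne.symm hiq), if_pos rfl]
      have e3 : (fun j => if j = i then (1 : ZMod (n q)) else if j = q then 1 else 0) i = 1 :=
        if_pos rfl
      have h := memq (fun j => if j = i then (1 : ZMod (n q)) else if j = q then 1 else 0)
        (by rw [if_neg (Ne.symm hip), if_neg hpq, if_neg (Ne.symm hiq), if_pos rfl]
            exact isCoprime_zero_left.mpr isUnit_one)
      rw [WW_eq_single p q hq _ g i hip hiq (fun j _ hjq hji => by
          show (if j = i then (1 : ZMod (n q)) else if j = q then 1 else 0) = 0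
          rw [if_neg hji, if_neg hjq]), if_neg (Ne.symm hip), if_neg hpq,
          if_neg (Ne.symm hiq), if_pos rfl] at h
      rw [if_pos rfl] at h
      haveI : NeZero (n i) := ⟨h0 i⟩
      have h4 : emb (n i) (n q) (hq i) (g i).toAdd = 0 := by linear_combination h - hYq
      have h3 : (g i).toAdd = 0 := emb_eq_zero _ _ (hq i) _ h4
      rw [← ofAdd_toAdd (g i), h3, ofAdd_zero]
      rfl
  · -- union is everything
    rw [Set.eq_univ_iff_forall]
    intro g
    rw [Set.mem_iUnion]
    obtain ⟨A, B, cop, hab⟩ := exists_ab (n q) (XX p q hq g) (YY q g)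
    have e1 : (fun j => if j = p then A else if j = q then B else 0) p = A := if_pos rfl
    have e2 : (fun j => if j = p then A else if j = q then B else 0) q = B := by
      show (if q = p then A else if q = q then B else 0) = B
      rw [if_neg (Ne.symm hpq), if_pos rfl]
    refine ⟨⟨fun j => if j = p then A else if j = q then B else 0, by rw [e1, e2]; exact cop⟩, ?_⟩
    show g ∈ (chiHom p q hq _).ker
    rw [MonoidHom.mem_ker]
    have hzero : (fun j => if j = p then A else if j = q then B else 0) p * XX p q hq g
        + (fun j => if j = p then A else if j = q then B else 0) q * YY q g
        + WW p q hq (fun j => if j = p then A else if j = q then B else 0) g = 0 := by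
      rw [e1, e2, WW_eq_zero' p q hq _ g (fun j hjp hjq => by
        show (if j = p then A else if j = q then B else 0) = 0
        rw [if_neg hjp, if_neg hjq])]
      linear_combination hab
    have h2 : Multiplicative.ofAdd ((fun j => if j = p then A else if j = q then B else 0) p
        * XX p q hq g
        + (fun j => if j = p then A else if j = q then B else 0) q * YY q g
        + WW p q hq (fun j => if j = p then A else if j = q then B else 0) g) = 1 :=
      ofAdd_eq_one.mpr hzero
    exact h2
  · -- isomorphic quotients
    intro c c'
    obtain ⟨u, v, huv⟩ := c.2
    obtain ⟨u', v', huv'⟩ := c'.2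
    exact ⟨(QuotientGroup.congr (H0 q) _
        (sigmaEquiv p q hq hp (c.1 p) (c.1 q) u v c.1 hpq hnp h0 huv)
        (map_sigma p q hq hp u v c.1 hpq hnp h0 huv)).symm.trans
      (QuotientGroup.congr (H0 q) _
        (sigmaEquiv p q hq hp (c'.1 p) (c'.1 q) u' v' c'.1 hpq hnp h0 huv')
        (map_sigma p q hq hp u' v' c'.1 hpq hnp h0 huv'))⟩
  · -- isomorphic subgroups
    intro c c'
    obtain ⟨u, v, huv⟩ := c.2
    obtain ⟨u', v', huv'⟩ := c'.2
    exact ⟨(((MulEquiv.subgroupMap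
          (sigmaEquiv p q hq hp (c.1 p) (c.1 q) u v c.1 hpq hnp h0 huv) (H0 q)).trans
        (MulEquiv.subgroupCongr (map_sigma p q hq hp u v c.1 hpq hnp h0 huv))).symm.trans
      ((MulEquiv.subgroupMap
          (sigmaEquiv p q hq hp (c'.1 p) (c'.1 q) u' v' c'.1 hpq hnp h0 huv') (H0 q)).trans
        (MulEquiv.subgroupCongr (map_sigma p q hq hp u' v' c'.1 hpq hnp h0 huv'))))⟩
end

section
/- A finite nontrivial abelian group G is capable (i.e., there exists a group L with G ≅ L/Z(L)) if and only if there exists a family {H_i}_{i∈I} of subgroups of G with ∩_i H_i = 1, ∪_i H_i = G, and G/H_i ≅ G/H_j for all i, j ∈ I. -/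
open Subgroup Multiplicative
open scoped commutatorElement

section Chars

variable {G : Type} [CommGroup G] [Finite G]

local notation "n" => Monoid.exponent G

structure Cen (G : Type) : Type where
  a : G
  b : G


theorem lift_of_surj {A B C : Type*} [Group A] [Group B] [CommGroup C]
    (π : A →* B) (hπ : Function.Surjective π) (ρ : A →* C) (h : π.ker ≤ ρ.ker) :
    ∃ σ : B →* C, ∀ a, σ (π a) = ρ a := by
  refine ⟨(QuotientGroup.lift π.ker ρ (fun a ha => h ha)).comp
    (QuotientGroup.quotientKerEquivOfSurjective π hπ).symm.toMonoidHom, fun a => ?_⟩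
  have : (QuotientGroup.quotientKerEquivOfSurjective π hπ).symm (π a) = QuotientGroup.mk a := by
    rw [MulEquiv.symm_apply_eq]; rfl
  simp [this]


theorem exists_min_pow_mem (H : Subgroup G) (g : G) :
    ∃ d : ℕ, 0 < d ∧ g ^ d ∈ H ∧ (∀ j : ℕ, g ^ j ∈ H → d ∣ j) ∧ d ∣ Monoid.exponent G := by
  have hex : ∃ d : ℕ, 0 < d ∧ g ^ d ∈ H :=
    ⟨Monoid.exponent G, Nat.pos_of_ne_zero Monoid.exponent_ne_zero_of_finite,
      by rw [Monoid.pow_exponent_eq_one]; exact H.one_mem⟩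
  classical
  set d := Nat.find hex with hdd
  obtain ⟨hd0, hdm⟩ := Nat.find_spec hex
  have hdvd : ∀ j : ℕ, g ^ j ∈ H → d ∣ j := by
    intro j hj
    rcases Nat.eq_zero_or_pos (j % d) with h0 | hpos
    · exact Nat.dvd_of_mod_eq_zero h0
    · exfalso
      have heq : g ^ j = (g ^ d) ^ (j / d) * g ^ (j % d) := by
        rw [← pow_mul, ← pow_add, Nat.div_add_mod]
      have hr : g ^ (j % d) ∈ H := by
        have h2 := H.mul_mem (H.inv_mem (H.pow_mem hdm (j / d))) hj
        rw [heq, inv_mul_cancel_left] at h2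
        exact h2
      exact Nat.find_min hex (Nat.mod_lt _ hd0) ⟨hpos, hr⟩
  exact ⟨d, hd0, hdm, hdvd, hdvd _ (by rw [Monoid.pow_exponent_eq_one]; exact H.one_mem)⟩

theorem solv (d : ℕ) (hd : d ∣ n) (hd0 : 0 < d) (c : ZMod n) (hc : (n/d : ℕ) • c = 0) :
    ∃ z : ZMod n, (d : ℤ) • z = c := by
  have hcv : ((c.val : ℕ) : ZMod n) = c := ZMod.natCast_rightInverse c
  have h1 : (((n/d) * c.val : ℕ) : ZMod n) = 0 := by
    push_cast
    rw [hcv] at *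
    rw [← nsmul_eq_mul] at *
    exact_mod_cast hc
  have h2 : n ∣ (n/d) * c.val := (ZMod.natCast_eq_zero_iff _ _).mp h1
  have h3 : d ∣ c.val := by
    obtain ⟨k, hk⟩ := h2
    have hpos : 0 < n/d := Nat.div_pos (Nat.le_of_dvd (Nat.pos_of_ne_zero Monoid.exponent_ne_zero_of_finite) hd) hd0
    refine ⟨k, Nat.eq_of_mul_eq_mul_left hpos ?_⟩
    rw [hk, ← mul_assoc, Nat.div_mul_cancel hd]
  refine ⟨((c.val / d : ℕ) : ZMod n), ?_⟩
  rw [natCast_zsmul, nsmul_eq_mul, ← Nat.cast_mul, Nat.mul_div_cancel' h3, hcv]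

theorem card_lt_of_lt {H K : Subgroup G} (h : H < K) : Nat.card H < Nat.card K := by
  have e1 : Nat.card H = (H : Set G).ncard := (Nat.card_coe_set_eq _).symm
  have e2 : Nat.card K = (K : Set G).ncard := (Nat.card_coe_set_eq _).symm
  rw [e1, e2]
  refine Set.ncard_lt_ncard ?_ (Set.toFinite _)
  exact_mod_cast h

theorem char_step (H : Subgroup G) (φ : H →* Multiplicative (ZMod n))
    (g : G) (d : ℕ) (hgd : g ^ d ∈ H) (hmin : ∀ j : ℕ, g ^ j ∈ H → d ∣ j)
    (z : ZMod n) (hz : (d : ℤ) • z = toAdd (φ ⟨g ^ d, hgd⟩)) :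
    ∃ ψ : ↥(H ⊔ zpowers g) →* Multiplicative (ZMod n),
      (∀ (x : G) (hx : x ∈ H) (hx' : x ∈ H ⊔ zpowers g), ψ ⟨x, hx'⟩ = φ ⟨x, hx⟩) ∧
      (∀ hg' : g ∈ H ⊔ zpowers g, ψ ⟨g, hg'⟩ = ofAdd z) := by
  set N := H ⊔ zpowers g with hN
  have hπ0mul : ∀ p q : H × Multiplicative ℤ,
      ((p*q).1 : G) * g ^ toAdd (p*q).2 = ((p.1 : G) * g ^ toAdd p.2) * ((q.1 : G) * g ^ toAdd q.2) := by
    intro p q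
    simp only [Prod.fst_mul, Prod.snd_mul, toAdd_mul, zpow_add, Subgroup.coe_mul]
    rw [mul_mul_mul_comm]
  set π0 : H × Multiplicative ℤ →* G := MonoidHom.mk' (fun p => (p.1 : G) * g ^ toAdd p.2) hπ0mul with hπ0
  have hrange : ∀ p, π0 p ∈ N := by
    intro p
    exact N.mul_mem (mem_sup_left p.1.2) (mem_sup_right (zpow_mem (mem_zpowers g) _))
  set π : H × Multiplicative ℤ →* N := π0.codRestrict _ hrange with hπdef
  have hsurj : Function.Surjective π := by
    rintro ⟨x, hx⟩
    rw [hN, mem_sup] at hx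
    obtain ⟨y, hy, w, hw, hyw⟩ := hx
    obtain ⟨j, rfl⟩ := mem_zpowers_iff.mp hw
    exact ⟨(⟨y, hy⟩, ofAdd j), Subtype.ext (by simpa [hπdef, hπ0] using hyw)⟩
  set ρ : H × Multiplicative ℤ →* Multiplicative (ZMod n) :=
    MonoidHom.mk' (fun p => φ p.1 * ofAdd (toAdd p.2 • z))
      (by intro p q
          simp only [Prod.fst_mul, Prod.snd_mul, toAdd_mul, add_smul, map_mul, ofAdd_add]
          rw [mul_mul_mul_comm]) with hρ
  have hker : π.ker ≤ ρ.ker := by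
    rintro ⟨h, j'⟩ hp
    have hp1 : (h : G) * g ^ toAdd j' = 1 := congrArg Subtype.val hp
    set j := toAdd j' with hj
    have hginv : g ^ (-j) = (h : G) := by
      rw [zpow_neg]
      exact inv_eq_of_mul_eq_one_right (by rw [mul_comm] at hp1; exact hp1)
    have hmem : g ^ j ∈ H := by
      have : g ^ (-j) ∈ H := hginv ▸ h.2
      simpa using H.inv_mem this
    have hdvd : (d : ℤ) ∣ j := by
      rcases Int.natAbs_eq j with he | he
      · rw [he]
        exact Int.natCast_dvd_natCast.mpr (hmin _ (by rw [← zpow_natCast, ← he]; exact hmem))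
      · rw [he]
        exact Dvd.dvd.neg_right (Int.natCast_dvd_natCast.mpr
          (hmin _ (by rw [← zpow_natCast]; rw [he] at hmem; simpa using H.inv_mem hmem)))
    obtain ⟨k, hk⟩ := hdvd
    have hφh : φ h = (φ ⟨g ^ d, hgd⟩) ^ (-k) := by
      rw [← map_zpow]
      congr 1
      apply Subtype.ext
      push_cast
      have h2 : (g ^ d) ^ (-k) = g ^ (-j) := by
        rw [hk, ← zpow_natCast g d, ← zpow_mul]
        congr 1
        ring
      rw [h2, hginv]
    show ρ (h, j') = 1
    have : ρ (h, j') = φ h * ofAdd (j • z) := rfl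
    rw [this, hφh, hk]
    apply toAdd.injective
    simp only [toAdd_mul, toAdd_ofAdd, toAdd_one, toAdd_zpow]
    rw [← hz, smul_smul]
    have h3 : (-k * (d:ℤ)) = -((d:ℤ) * k) := by ring
    rw [h3, neg_smul, neg_add_cancel]
  obtain ⟨σ, hσ⟩ := lift_of_surj π hsurj ρ hker
  refine ⟨σ, ?_, ?_⟩
  · intro x hx hx'
    have h1 : (⟨x, hx'⟩ : N) = π (⟨x, hx⟩, ofAdd 0) := Subtype.ext (by simp [hπdef, hπ0])
    rw [h1, hσ]
    show φ _ * ofAdd ((0:ℤ) • z) = φ _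
    simp
  · intro hg'
    have h1 : (⟨g, hg'⟩ : N) = π (1, ofAdd 1) := Subtype.ext (by simp [hπdef, hπ0])
    rw [h1, hσ]
    show φ 1 * ofAdd ((1:ℤ) • z) = ofAdd z
    simp

theorem char_ext (H : Subgroup G) (φ : H →* Multiplicative (ZMod n)) :
    ∃ ψ : G →* Multiplicative (ZMod n), ∀ (x : G) (hx : x ∈ H), ψ x = φ ⟨x, hx⟩ := by
  obtain ⟨k, hk⟩ : ∃ k, Nat.card G - Nat.card H ≤ k := ⟨_, le_rfl⟩
  induction k generalizing H with
  | zero =>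
    -- card H = card G so H = ⊤
    have hH : H = ⊤ := by
      have h1 : Nat.card G ≤ Nat.card H := by omega
      by_contra hne
      have : H < ⊤ := lt_top_iff_ne_top.mpr hne
      have := card_lt_of_lt this
      have h2 : Nat.card (⊤ : Subgroup G) = Nat.card G := Subgroup.card_top
      omega
    subst hH
    refine ⟨φ.comp ((Subgroup.topEquiv (G := G)).symm.toMonoidHom), fun x hx => ?_⟩
    simp only [MonoidHom.comp_apply]
    congr 1
  | succ k ih =>
    by_cases hH : H = ⊤
    · subst hH
      refine ⟨φ.comp ((Subgroup.topEquiv (G := G)).symm.toMonoidHom), fun x hx => ?_⟩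
      simp only [MonoidHom.comp_apply]
      congr 1
    · obtain ⟨g, hg⟩ : ∃ g : G, g ∉ H := by
        by_contra hc
        push_neg at hc
        exact hH ((Subgroup.eq_top_iff' H).mpr hc)
      obtain ⟨d, hd0, hgd, hmin, hdn⟩ := exists_min_pow_mem H g
      have hpow1 : (⟨g ^ d, hgd⟩ : H) ^ (n / d) = 1 := by
        apply Subtype.ext
        show (g ^ d) ^ (n / d) = 1
        rw [← pow_mul, Nat.mul_div_cancel' hdn, Monoid.pow_exponent_eq_one]
      have hc : (n / d : ℕ) • (toAdd (φ ⟨g ^ d, hgd⟩)) = 0 := by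
        rw [← toAdd_pow, ← map_pow, hpow1, map_one, toAdd_one]
      obtain ⟨z, hz⟩ := solv d hdn hd0 _ hc
      obtain ⟨ψ', hψ'1, _⟩ := char_step H φ g d hgd hmin z hz
      have hlt : H < H ⊔ zpowers g :=
        lt_of_le_of_ne le_sup_left (fun he => hg (he ▸ mem_sup_right (mem_zpowers g)))
      have hcard : Nat.card G - Nat.card ↥(H ⊔ zpowers g) ≤ k := by
        have h1 := card_lt_of_lt hlt
        have h2 : Nat.card ↥(H ⊔ zpowers g) ≤ Nat.card G := card_le_card_group _
        omega
      obtain ⟨ψ, hψ⟩ := ih (H ⊔ zpowers g) ψ' hcard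
      exact ⟨ψ, fun x hx => by rw [hψ x (mem_sup_left hx), hψ'1 x hx]⟩

theorem surj_of_maps_to_one {ψ : G →* Multiplicative (ZMod n)} (y : G)
    (hy : ψ y = ofAdd 1) : Function.Surjective ψ := by
  intro m
  refine ⟨y ^ (toAdd m).val, ?_⟩
  rw [map_pow, hy]
  apply toAdd.injective
  rw [toAdd_pow, toAdd_ofAdd, nsmul_eq_mul, mul_one, ZMod.natCast_rightInverse]

theorem base_char (g : G) (hg : orderOf g = n) :
    ∃ φ : ↥((⊥ : Subgroup G) ⊔ zpowers g) →* Multiplicative (ZMod n),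
      ∀ hm : g ∈ (⊥ : Subgroup G) ⊔ zpowers g, φ ⟨g, hm⟩ = ofAdd 1 := by
  have hmin : ∀ j : ℕ, g ^ j ∈ (⊥ : Subgroup G) → (n : ℕ) ∣ j := by
    intro j hj
    rw [mem_bot] at hj
    rw [← hg]
    exact orderOf_dvd_of_pow_eq_one hj
  have hgd : g ^ (n : ℕ) ∈ (⊥ : Subgroup G) := by
    rw [mem_bot, Monoid.pow_exponent_eq_one]
  have hz : ((n : ℕ) : ℤ) • (1 : ZMod n) = toAdd ((1 : ↥(⊥ : Subgroup G) →* Multiplicative (ZMod n)) ⟨g ^ (n:ℕ), hgd⟩) := by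
    simp [ZMod.natCast_self]
  obtain ⟨φ, _, hφg⟩ := char_step (⊥ : Subgroup G) 1 g (n : ℕ) hgd hmin 1 hz
  exact ⟨φ, hφg⟩

theorem sep_char {x : G} (hx : x ≠ 1) :
    ∃ ψ : G →* Multiplicative (ZMod n), Function.Surjective ψ ∧ ψ x ≠ 1 := by
  obtain ⟨g, hg⟩ := Monoid.exists_orderOf_eq_exponent (Monoid.ExponentExists.of_finite (G := G))
  obtain ⟨φg, hφg⟩ := base_char g hg
  by_cases hxH : x ∈ (⊥ : Subgroup G) ⊔ zpowers g
  · -- x is a power of g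
    have hxz : x ∈ zpowers g := by rwa [bot_sup_eq] at hxH
    obtain ⟨w, hw⟩ := mem_zpowers_iff.mp hxz
    have hφx : φg ⟨x, hxH⟩ = ofAdd ((w : ZMod n)) := by
      have h1 : (⟨x, hxH⟩ : ↥((⊥ : Subgroup G) ⊔ zpowers g)) = (⟨g, mem_sup_right (mem_zpowers g)⟩ : ↥((⊥ : Subgroup G) ⊔ zpowers g)) ^ w :=
        Subtype.ext (by simpa using hw.symm)
      rw [h1, map_zpow, hφg]
      apply toAdd.injective
      rw [toAdd_zpow, toAdd_ofAdd, toAdd_ofAdd, zsmul_eq_mul, mul_one]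
    have hwne : ((w : ZMod n)) ≠ 0 := by
      intro h0
      have : ((n : ℕ) : ℤ) ∣ w := by
        rwa [ZMod.intCast_zmod_eq_zero_iff_dvd] at h0
      obtain ⟨k, hk⟩ := this
      apply hx
      rw [← hw, hk, zpow_mul, zpow_natCast, Monoid.pow_exponent_eq_one, one_zpow]
    obtain ⟨ψ, hψ⟩ := char_ext ((⊥ : Subgroup G) ⊔ zpowers g) φg
    refine ⟨ψ, surj_of_maps_to_one g (by rw [hψ g (mem_sup_right (mem_zpowers g)), hφg]), ?_⟩
    rw [hψ x hxH, hφx]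
    simpa using hwne
  · obtain ⟨d, hd0, hxd, hmin, hdn⟩ := exists_min_pow_mem ((⊥ : Subgroup G) ⊔ zpowers g) x
    have hd1 : d ≠ 1 := by
      intro h1
      rw [h1, pow_one] at hxd
      exact hxH hxd
    have hpow1 : (⟨x ^ d, hxd⟩ : ↥((⊥ : Subgroup G) ⊔ zpowers g)) ^ ((n : ℕ) / d) = 1 := by
      apply Subtype.ext
      show (x ^ d) ^ ((n:ℕ) / d) = 1
      rw [← pow_mul, Nat.mul_div_cancel' hdn, Monoid.pow_exponent_eq_one]
    have hc : ((n : ℕ) / d : ℕ) • (toAdd (φg ⟨x ^ d, hxd⟩)) = 0 := by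
      rw [← toAdd_pow, ← map_pow, hpow1, map_one, toAdd_one]
    obtain ⟨z₀, hz₀⟩ := solv d hdn hd0 _ hc
    have hndlt : 0 < (n : ℕ) / d ∧ (n : ℕ) / d < (n : ℕ) := by
      have hnpos : 0 < (n : ℕ) := Nat.pos_of_ne_zero Monoid.exponent_ne_zero_of_finite
      constructor
      · exact Nat.div_pos (Nat.le_of_dvd hnpos hdn) hd0
      · exact Nat.div_lt_self hnpos (by omega)
    have hndne : (((n : ℕ) / d : ℕ) : ZMod n) ≠ 0 := by
      rw [Ne, ZMod.natCast_eq_zero_iff]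
      intro hdvd
      exact absurd (Nat.le_of_dvd hndlt.1 hdvd) (not_le.mpr hndlt.2)
    -- choose a nonzero solution z
    obtain ⟨z, hz, hzne⟩ : ∃ z : ZMod n, (d : ℤ) • z = toAdd (φg ⟨x ^ d, hxd⟩) ∧ z ≠ 0 := by
      by_cases h0 : z₀ = 0
      · refine ⟨z₀ + (((n : ℕ) / d : ℕ) : ZMod n), ?_, by rwa [h0, zero_add]⟩
        rw [smul_add, hz₀, add_eq_left, zsmul_eq_mul]
        push_cast
        rw [← Nat.cast_mul, Nat.mul_div_cancel' hdn, ZMod.natCast_self]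
      · exact ⟨z₀, hz₀, h0⟩
    obtain ⟨ψ₂, hψ₂H, hψ₂x⟩ := char_step ((⊥ : Subgroup G) ⊔ zpowers g) φg x d hxd hmin z hz
    obtain ⟨ψ, hψ⟩ := char_ext (((⊥ : Subgroup G) ⊔ zpowers g) ⊔ zpowers x) ψ₂
    have hgmem : g ∈ (⊥ : Subgroup G) ⊔ zpowers g := mem_sup_right (mem_zpowers g)
    refine ⟨ψ, surj_of_maps_to_one g ?_, ?_⟩
    · rw [hψ g (mem_sup_left hgmem), hψ₂H g hgmem, hφg]
    · rw [hψ x (mem_sup_right (mem_zpowers x)), hψ₂x]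
      simpa using hzne

theorem surj_char : ∃ ψ : G →* Multiplicative (ZMod n), Function.Surjective ψ := by
  obtain ⟨g, hg⟩ := Monoid.exists_orderOf_eq_exponent (Monoid.ExponentExists.of_finite (G := G))
  obtain ⟨φg, hφg⟩ := base_char g hg
  obtain ⟨ψ, hψ⟩ := char_ext _ φg
  exact ⟨ψ, surj_of_maps_to_one g (by rw [hψ g (mem_sup_right (mem_zpowers g)), hφg])⟩

theorem kill_char (x : G) (hxx : Monoid.exponent (G ⧸ zpowers x) = n) :
    ∃ ψ : G →* Multiplicative (ZMod n), Function.Surjective ψ ∧ ψ x = 1 := by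
  haveI := (zpowers x).normal_of_comm
  have h := surj_char (G := G ⧸ zpowers x)
  rw [hxx] at h
  obtain ⟨Φ, hΦ⟩ := h
  refine ⟨Φ.comp (QuotientGroup.mk' (zpowers x)), hΦ.comp (QuotientGroup.mk'_surjective _), ?_⟩
  have : QuotientGroup.mk' (zpowers x) x = 1 := (QuotientGroup.eq_one_iff x).mpr (mem_zpowers x)
  rw [MonoidHom.comp_apply, this, map_one]

theorem family_of_star (hxx : ∀ x : G, Monoid.exponent (G ⧸ zpowers x) = n) :
    ∃ (I : Type) (H : I → Subgroup G),
      (⨅ i, H i) = ⊥ ∧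
      (⋃ i, (H i : Set G)) = Set.univ ∧
      ∀ i j : I, Nonempty ((G ⧸ H i) ≃* (G ⧸ H j)) := by
  refine ⟨{ψ : G →* Multiplicative (ZMod n) // Function.Surjective ψ}, fun ψ => ψ.1.ker, ?_, ?_, ?_⟩
  · rw [eq_bot_iff]
    intro x hxmem
    rw [Subgroup.mem_iInf] at hxmem
    rw [mem_bot]
    by_contra hx1
    obtain ⟨ψ, hsurj, hne⟩ := sep_char hx1
    exact hne (hxmem ⟨ψ, hsurj⟩)
  · rw [Set.eq_univ_iff_forall]
    intro x
    obtain ⟨ψ, hsurj, h1⟩ := kill_char x (hxx x)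
    exact Set.mem_iUnion.mpr ⟨⟨ψ, hsurj⟩, h1⟩
  · intro i j
    exact ⟨(QuotientGroup.quotientKerEquivOfSurjective i.1 i.2).trans
      (QuotientGroup.quotientKerEquivOfSurjective j.1 j.2).symm⟩

theorem zpowers_pow_gcd (x : G) (s : ℕ) :
    zpowers (x ^ s) = zpowers (x ^ Nat.gcd (orderOf x) s) := by
  apply le_antisymm
  · rw [zpowers_le]
    obtain ⟨k, hk⟩ := Nat.gcd_dvd_right (orderOf x) s
    refine mem_zpowers_iff.mpr ⟨(k : ℤ), ?_⟩
    rw [← zpow_natCast x ((orderOf x).gcd s), ← zpow_mul, ← Nat.cast_mul, ← hk, zpow_natCast]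
  · rw [zpowers_le]
    have hb := Nat.gcd_eq_gcd_ab (orderOf x) s
    refine mem_zpowers_iff.mpr ⟨Nat.gcdB (orderOf x) s, ?_⟩
    have h2 : x ^ (((orderOf x).gcd s : ℕ) : ℤ) = x ^ ((s : ℤ) * (orderOf x).gcdB s) := by
      rw [hb, zpow_add, zpow_mul, zpow_natCast x (orderOf x), pow_orderOf_eq_one, one_zpow, one_mul]
    rw [← zpow_natCast x s, ← zpow_mul, ← h2, zpow_natCast]

theorem cyc_mem {x a b : G} (ha : a ∈ zpowers x) (hb : b ∈ zpowers x)
    (hord : orderOf a = orderOf b) : b ∈ zpowers a := by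
  obtain ⟨s, hs⟩ := mem_powers_iff_mem_zpowers.mpr ha
  obtain ⟨t, ht⟩ := mem_powers_iff_mem_zpowers.mpr hb
  have hd : 0 < orderOf x := orderOf_pos x
  have hgcd : Nat.gcd (orderOf x) s = Nat.gcd (orderOf x) t := by
    have h1 : orderOf a = orderOf x / Nat.gcd (orderOf x) s := by rw [← hs, orderOf_pow]
    have h2 : orderOf b = orderOf x / Nat.gcd (orderOf x) t := by rw [← ht, orderOf_pow]
    have h3 := h1 ▸ h2 ▸ hord
    have g1 := Nat.gcd_dvd_left (orderOf x) s
    have g2 := Nat.gcd_dvd_left (orderOf x) t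
    rw [← Nat.div_div_self g1 hd.ne', ← Nat.div_div_self g2 hd.ne', h3]
  have e1 : zpowers a = zpowers (x ^ Nat.gcd (orderOf x) s) := by rw [← hs, zpowers_pow_gcd]
  have e2 : zpowers b = zpowers (x ^ Nat.gcd (orderOf x) t) := by rw [← ht, zpowers_pow_gcd]
  have : b ∈ zpowers b := mem_zpowers b
  rwa [e2, ← hgcd, ← e1] at this

theorem pair_of_maxq {g : G} (hg : orderOf g = n)
    (hq : Monoid.exponent (G ⧸ zpowers g) = n) :
    ∃ h : G, orderOf h = n ∧ ∀ m : ℕ, h ^ m ∈ zpowers g → (n : ℕ) ∣ m := by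
  haveI := (zpowers g).normal_of_comm
  obtain ⟨q, hqord⟩ := Monoid.exists_orderOf_eq_exponent
    (Monoid.ExponentExists.of_finite (G := G ⧸ zpowers g))
  rw [hq] at hqord
  obtain ⟨h, rfl⟩ := QuotientGroup.mk'_surjective (zpowers g) q
  refine ⟨h, ?_, ?_⟩
  · refine Nat.dvd_antisymm (Monoid.order_dvd_exponent h) ?_
    rw [← hqord]
    exact orderOf_map_dvd (QuotientGroup.mk' (zpowers g)) h
  · intro m hm
    rw [← hqord]
    apply orderOf_dvd_of_pow_eq_one
    rw [← map_pow]
    exact (QuotientGroup.eq_one_iff _).mpr hm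

theorem maxq_of_pair {g h : G} (hg : orderOf g = n) (hh : orderOf h = n)
    (hind : ∀ m : ℕ, h ^ m ∈ zpowers g → (n : ℕ) ∣ m) (x : G) :
    Monoid.exponent (G ⧸ zpowers x) = n := by
  haveI := (zpowers x).normal_of_comm
  set m := Monoid.exponent (G ⧸ zpowers x) with hm
  have hmn : m ∣ n := MonoidHom.exponent_dvd (QuotientGroup.mk'_surjective (zpowers x))
  have hmem : ∀ y : G, y ^ m ∈ zpowers x := by
    intro y
    rw [← QuotientGroup.eq_one_iff, QuotientGroup.mk_pow]
    exact Monoid.pow_exponent_eq_one _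
  have hord : orderOf (g ^ m) = orderOf (h ^ m) := by
    rw [orderOf_pow, orderOf_pow, hg, hh]
  have hb : h ^ m ∈ zpowers (g ^ m) := cyc_mem (hmem g) (hmem h) hord
  have hbg : h ^ m ∈ zpowers g := by
    have : zpowers (g ^ m) ≤ zpowers g := by
      rw [zpowers_le]
      exact mem_zpowers_iff.mpr ⟨(m : ℤ), zpow_natCast g m⟩
    exact this hb
  exact Nat.dvd_antisymm hmn (hind m hbg)

theorem cap_pow_eq_one {L : Type} [Group L] (e : G ≃* L ⧸ Subgroup.center L) (g : G) :
    g ^ Monoid.exponent (G ⧸ zpowers g) = 1 := by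
  haveI := (zpowers g).normal_of_comm
  set m := Monoid.exponent (G ⧸ zpowers g) with hm
  -- commutators are central
  have hqcomm : ∀ u v : L ⧸ Subgroup.center L, u * v = v * u := by
    intro u v
    apply e.symm.injective
    rw [map_mul, map_mul, mul_comm]
  have hcen : ∀ a b : L, ⁅a, b⁆ ∈ Subgroup.center L := by
    intro a b
    rw [← QuotientGroup.eq_one_iff]
    have : ((⁅a, b⁆ : L) : L ⧸ Subgroup.center L) = ⁅(a : L ⧸ Subgroup.center L), (b : L ⧸ Subgroup.center L)⁆ := rfl
    rw [this, commutatorElement_eq_one_iff_mul_comm]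
    exact hqcomm _ _
  have hconj : ∀ (w : L) (z : L), z ∈ Subgroup.center L → w * z * w⁻¹ = z := by
    intro w z hz
    rw [Subgroup.mem_center_iff] at hz
    rw [hz w, mul_inv_cancel_right]
  have hid : ∀ a b c : L, ⁅a, b * c⁆ = ⁅a, b⁆ * (b * ⁅a, c⁆ * b⁻¹) := by
    intro a b c
    simp only [commutatorElement_def]
    group
  have key1 : ∀ (a b : L) (k : ℕ), ⁅a, b ^ k⁆ = ⁅a, b⁆ ^ k := by
    intro a b k
    induction k with
    | zero => simp
    | succ k ih =>
      rw [pow_succ', hid, hconj b _ (hcen a (b ^ k)), ih, pow_succ']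
  have hid2 : ∀ a b c : L, ⁅a * c, b⁆ = (a * ⁅c, b⁆ * a⁻¹) * ⁅a, b⁆ := by
    intro a b c
    simp only [commutatorElement_def]
    group
  have key2 : ∀ (a b : L) (k : ℕ), ⁅a ^ k, b⁆ = ⁅a, b⁆ ^ k := by
    intro a b k
    induction k with
    | zero => simp
    | succ k ih =>
      rw [pow_succ', hid2, hconj a _ (hcen (a ^ k) b), ih, pow_succ]
  -- choose x over e g
  obtain ⟨x, hx0⟩ := QuotientGroup.mk'_surjective (Subgroup.center L) (e g)
  have hx : (x : L ⧸ Subgroup.center L) = e g := hx0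
  -- x ^ m is central
  have hxm : x ^ m ∈ Subgroup.center L := by
    rw [Subgroup.mem_center_iff]
    intro y
    rw [← commutatorElement_eq_one_iff_mul_comm]
    -- ⁅y, x^m⁆ = ⁅y,x⁆^m ; show ⁅y, x⁆ ^ m = 1 i.e. ⁅x,y⁆… use key1 with a := y, b := x
    rw [key1]
    -- find a, z with y ^ m = x ^ a * z
    have h1 : (e.symm ((y : L ⧸ Subgroup.center L))) ^ m ∈ zpowers g := by
      rw [← QuotientGroup.eq_one_iff, QuotientGroup.mk_pow]
      exact Monoid.pow_exponent_eq_one _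
    obtain ⟨a, ha⟩ := mem_zpowers_iff.mp h1
    have h2 : ((y ^ m : L) : L ⧸ Subgroup.center L) = ((x ^ a : L) : L ⧸ Subgroup.center L) := by
      rw [QuotientGroup.mk_pow, QuotientGroup.mk_zpow, hx]
      calc ((y : L ⧸ Subgroup.center L)) ^ m
          = e (e.symm ((y : L ⧸ Subgroup.center L)) ^ m) := by rw [map_pow, MulEquiv.apply_symm_apply]
        _ = e (g ^ a) := by rw [ha]
        _ = (e g) ^ a := by rw [map_zpow]
    have h3 : (x ^ a)⁻¹ * (y ^ m) ∈ Subgroup.center L := by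
      rw [← QuotientGroup.eq_one_iff]
      rw [QuotientGroup.mk_mul, QuotientGroup.mk_inv, h2]
      simp
    -- ⁅y, x⁆ ^ m = ⁅y, y ^ m⁆ -like computation: ⁅y, x⁆^m = ⁅y, x^?⁆ no:
    -- we use: ⁅y,x⁆^m = ⁅y^m, x⁆ = ⁅x^a * z, x⁆ = 1
    rw [← key2]
    set z := (x ^ a)⁻¹ * (y ^ m) with hz
    have hy : y ^ m = x ^ a * z := by rw [hz]; group
    rw [hy, commutatorElement_eq_one_iff_mul_comm]
    have hzc := Subgroup.mem_center_iff.mp h3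
    calc (x ^ a * z) * x = x ^ a * (z * x) := by rw [mul_assoc]
      _ = x ^ a * (x * z) := by rw [← hzc x]
      _ = (x ^ a * x) * z := by rw [mul_assoc]
      _ = (x * x ^ a) * z := by rw [← zpow_one_add, ← zpow_add_one, add_comm]
      _ = x * (x ^ a * z) := by rw [mul_assoc]
  -- conclude
  have h4 : ((x ^ m : L) : L ⧸ Subgroup.center L) = 1 := (QuotientGroup.eq_one_iff _).mpr hxm
  rw [QuotientGroup.mk_pow, hx] at h4
  apply e.injective
  rw [map_pow, h4, map_one]

theorem star_of_cap {L : Type} [Group L] (e : G ≃* L ⧸ Subgroup.center L) (x : G) :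
    Monoid.exponent (G ⧸ zpowers x) = n := by
  obtain ⟨g, hg⟩ := Monoid.exists_orderOf_eq_exponent (Monoid.ExponentExists.of_finite (G := G))
  haveI := (zpowers g).normal_of_comm
  have hmq : Monoid.exponent (G ⧸ zpowers g) = n := by
    apply Nat.dvd_antisymm
    · exact MonoidHom.exponent_dvd (QuotientGroup.mk'_surjective (zpowers g))
    · rw [← hg]
      exact orderOf_dvd_of_pow_eq_one (cap_pow_eq_one e g)
  obtain ⟨h, hh, hind⟩ := pair_of_maxq hg hmq
  exact maxq_of_pair hg hh hind x

theorem star_of_family {I : Type} (H : I → Subgroup G) (h1 : (⨅ i, H i) = ⊥)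
    (h2 : (⋃ i, ((H i : Subgroup G) : Set G)) = Set.univ)
    (h3 : ∀ i j : I, Nonempty ((G ⧸ H i) ≃* (G ⧸ H j))) (x : G) :
    Monoid.exponent (G ⧸ zpowers x) = n := by
  haveI := (zpowers x).normal_of_comm
  obtain ⟨i₀, hxi⟩ : ∃ i, x ∈ H i := by
    have := Set.eq_univ_iff_forall.mp h2 x
    simpa using this
  set E := Monoid.exponent (G ⧸ H i₀) with hE
  -- n divides E
  have hnE : (n : ℕ) ∣ E := by
    apply Monoid.exponent_dvd_of_forall_pow_eq_one
    intro y
    have hy : y ^ E ∈ ⨅ i, H i := by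
      rw [Subgroup.mem_iInf]
      intro i
      have hEi : Monoid.exponent (G ⧸ H i) = E :=
        Monoid.exponent_eq_of_mulEquiv (h3 i i₀).some
      have : ((y ^ E : G) : G ⧸ H i) = 1 := by
        rw [QuotientGroup.mk_pow, ← hEi]
        exact Monoid.pow_exponent_eq_one _
      exact (QuotientGroup.eq_one_iff _).mp this
    rw [h1, mem_bot] at hy
    exact hy
  -- E divides exponent of G/zpowers x
  have hle : zpowers x ≤ H i₀ := zpowers_le.mpr hxi
  have hEdvd : E ∣ Monoid.exponent (G ⧸ zpowers x) := by
    have hsurj : Function.Surjective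
        (QuotientGroup.map (zpowers x) (H i₀) (MonoidHom.id G) (by simpa using hle)) := by
      intro q
      obtain ⟨y, rfl⟩ := QuotientGroup.mk'_surjective (H i₀) q
      exact ⟨((y : G) : G ⧸ zpowers x), by simp [QuotientGroup.map_mk]⟩
    exact MonoidHom.exponent_dvd hsurj
  have hdvdn : Monoid.exponent (G ⧸ zpowers x) ∣ n :=
    MonoidHom.exponent_dvd (QuotientGroup.mk'_surjective (zpowers x))
  exact Nat.dvd_antisymm hdvdn (hnE.trans hEdvd)

noncomputable def eexp (ψ : G →* Multiplicative (ZMod (Monoid.exponent G))) (x : G) : ℕ := (toAdd (ψ x)).val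

theorem eexp_one (ψ : G →* Multiplicative (ZMod n)) : eexp ψ 1 = 0 := by
  rw [eexp, map_one]
  exact ZMod.val_zero

theorem pow_eexp_mul (ψ : G →* Multiplicative (ZMod n)) (c x y : G) :
    c ^ eexp ψ (x * y) = c ^ eexp ψ x * c ^ eexp ψ y := by
  have hZ : ∀ k : ℕ, c ^ (k % (n : ℕ)) = c ^ k := by
    intro k
    conv_rhs => rw [← Nat.div_add_mod k (n : ℕ)]
    rw [pow_add, pow_mul, Monoid.pow_exponent_eq_one, one_pow, one_mul]
  rw [eexp, map_mul]
  show c ^ (toAdd (ψ x) + toAdd (ψ y)).val = _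
  rw [ZMod.val_add, hZ, pow_add]
  rfl

noncomputable def cmul (ψ : G →* Multiplicative (ZMod n)) (p q : Cen G) : Cen G :=
  ⟨p.a * q.a, p.b * q.b * q.a ^ eexp ψ p.a⟩

noncomputable def cgroup (ψ : G →* Multiplicative (ZMod n)) : Group (Cen G) where
  mul := cmul ψ
  one := ⟨1, 1⟩
  inv p := ⟨p.a⁻¹, p.b⁻¹ * p.a ^ eexp ψ p.a⟩
  mul_assoc p q r := by
    show cmul ψ (cmul ψ p q) r = cmul ψ p (cmul ψ q r)
    rcases p with ⟨pa, pb⟩; rcases q with ⟨qa, qb⟩; rcases r with ⟨ra, rb⟩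
    simp only [cmul, Cen.mk.injEq, pow_eexp_mul ψ ra, mul_pow]
    constructor
    · rw [mul_assoc]
    · simp [mul_assoc, mul_comm, mul_left_comm]
  one_mul p := by
    show cmul ψ ⟨1, 1⟩ p = p
    rcases p with ⟨pa, pb⟩
    simp [cmul, eexp_one]
  mul_one p := by
    show cmul ψ p ⟨1, 1⟩ = p
    rcases p with ⟨pa, pb⟩
    simp [cmul]
  inv_mul_cancel p := by
    show cmul ψ ⟨p.a⁻¹, p.b⁻¹ * p.a ^ eexp ψ p.a⟩ p = ⟨1, 1⟩
    rcases p with ⟨pa, pb⟩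
    simp only [cmul, Cen.mk.injEq]
    constructor
    · exact inv_mul_cancel pa
    · have h1 : pa ^ eexp ψ pa⁻¹ * pa ^ eexp ψ pa = 1 := by
        rw [← pow_eexp_mul ψ pa pa⁻¹ pa, inv_mul_cancel, eexp_one, pow_zero]
      calc pb⁻¹ * pa ^ eexp ψ pa * pb * pa ^ eexp ψ pa⁻¹
          = (pb⁻¹ * pb) * (pa ^ eexp ψ pa⁻¹ * pa ^ eexp ψ pa) := by
            simp [mul_assoc, mul_comm, mul_left_comm]
        _ = 1 := by rw [inv_mul_cancel, h1, mul_one]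

theorem capable_of_pair [Nontrivial G] (ψ : G →* Multiplicative (ZMod n))
    (hψ : Function.Surjective ψ) {g h : G} (hg : orderOf g = n) (hh : orderOf h = n)
    (hind : ∀ m : ℕ, h ^ m ∈ zpowers g → (n : ℕ) ∣ m) :
    ∃ (L : Type) (_ : Group L), Nonempty (G ≃* L ⧸ Subgroup.center L) := by
  letI : Group (Cen G) := cgroup ψ
  refine ⟨Cen G, inferInstance, ?_⟩
  set π : Cen G →* G :=
    { toFun := fun p => p.a, map_one' := rfl, map_mul' := fun p q => rfl } with hπ
  have hsurj : Function.Surjective π := fun x => ⟨⟨x, 1⟩, rfl⟩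
  have hker : π.ker = Subgroup.center (Cen G) := by
    ext p
    rw [MonoidHom.mem_ker, Subgroup.mem_center_iff]
    constructor
    · intro hp q
      show cmul ψ q p = cmul ψ p q
      have hpa : p.a = 1 := hp
      rcases p with ⟨pa, pb⟩
      simp only at hpa
      subst hpa
      rcases q with ⟨qa, qb⟩
      simp only [cmul, Cen.mk.injEq, eexp_one]
      constructor <;> simp [mul_comm]
    · intro hp
      show p.a = 1
      have hy : ∀ y : G, p.a ^ eexp ψ y = y ^ eexp ψ p.a := by
        intro y
        have hq := hp ⟨y, 1⟩
        have hb := congrArg Cen.b hq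
        show _ = _
        have hb' : (1 : G) * p.b * p.a ^ eexp ψ y = p.b * 1 * y ^ eexp ψ p.a := hb
        rw [one_mul, mul_one] at hb'
        rw [mul_comm p.b] at hb'
        nth_rewrite 2 [mul_comm] at hb'
        exact mul_right_cancel hb'
      by_cases hc : toAdd (ψ p.a) = 0
      · obtain ⟨y₀, hy₀⟩ := hψ (ofAdd 1)
        haveI : Fact (1 < (n : ℕ)) := ⟨Monoid.one_lt_exponent⟩
        have h1 := hy y₀
        rw [eexp, hy₀, toAdd_ofAdd, ZMod.val_one, pow_one, eexp, hc, ZMod.val_zero, pow_zero] at h1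
        exact h1
      · exfalso
        set c := eexp ψ p.a with hcdef
        have hc0 : c ≠ 0 := by
          rw [hcdef, eexp, Ne, ZMod.val_eq_zero]
          exact hc
        have hclt : c < (n : ℕ) := ZMod.val_lt _
        have hgc : g ^ c ∈ zpowers p.a :=
          mem_zpowers_iff.mpr ⟨(eexp ψ g : ℤ), by rw [zpow_natCast, hy g]⟩
        have hhc : h ^ c ∈ zpowers p.a :=
          mem_zpowers_iff.mpr ⟨(eexp ψ h : ℤ), by rw [zpow_natCast, hy h]⟩
        have hord : orderOf (g ^ c) = orderOf (h ^ c) := by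
          rw [orderOf_pow, orderOf_pow, hg, hh]
        have hmem := cyc_mem hgc hhc hord
        have hbg : h ^ c ∈ zpowers g := by
          have hle : zpowers (g ^ c) ≤ zpowers g := by
            rw [zpowers_le]
            exact mem_zpowers_iff.mpr ⟨(c : ℤ), zpow_natCast g c⟩
          exact hle hmem
        have := hind c hbg
        have := Nat.le_of_dvd (Nat.pos_of_ne_zero hc0) this
        omega
  exact ⟨(QuotientGroup.quotientKerEquivOfSurjective π hsurj).symm.trans
    (QuotientGroup.quotientMulEquivOfEq hker)⟩


end Chars

theorem stmt_8 {G : Type} [CommGroup G] [Finite G] [Nontrivial G] :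
    (∃ (L : Type) (_ : Group L), Nonempty (G ≃* L ⧸ Subgroup.center L)) ↔
    ∃ (I : Type) (H : I → Subgroup G),
      (⨅ i, H i) = ⊥ ∧
      (⋃ i, (H i : Set G)) = Set.univ ∧
      ∀ i j : I, Nonempty ((G ⧸ H i) ≃* (G ⧸ H j)) := by
  constructor
  · rintro ⟨L, hL, he⟩
    letI := hL
    obtain ⟨e⟩ := he
    exact family_of_star (fun x => star_of_cap e x)
  · rintro ⟨I, H, h1, h2, h3⟩
    have hstar : ∀ x : G, Monoid.exponent (G ⧸ Subgroup.zpowers x) = Monoid.exponent G :=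
      fun x => star_of_family H h1 h2 h3 x
    obtain ⟨g, hg⟩ := Monoid.exists_orderOf_eq_exponent (Monoid.ExponentExists.of_finite (G := G))
    obtain ⟨h, hh, hind⟩ := pair_of_maxq hg (hstar g)
    obtain ⟨ψ, hψ⟩ := surj_char (G := G)
    exact capable_of_pair ψ hψ hg hh hind
end

section
/- Let G = C_{n_1} × ... × C_{n_k} with 1 < n_1 | n_2 | ... | n_k and k ≥ 2, with generators a_1, ..., a_k of the factors. For 1 ≤ i ≤ k−1, the subgroup H_i = ⟨a_1, ..., a_{i−1}, a_i a_k^{n_k/n_i}, a_{i+1}, ..., a_{k−1}⟩ is isomorphic to C_{n_1} × ... × C_{n_{k−1}}. -/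
def phi (k : ℕ) (hk : 2 ≤ k) (n : Fin k → ℕ) (i : Fin k) (hi : (i : ℕ) < k - 1)
    (cor : ZMod (n i) →+ ZMod (n ⟨k - 1, by have := hk; omega⟩)) :
    (∀ j : Fin (k - 1), Multiplicative (ZMod (n (Fin.castLE (by have := hk; omega) j)))) →* IG k n where
  toFun x := (fun t : Fin k => if h : (t : ℕ) < k - 1 then x ⟨t.1, h⟩ else 1) *
    Pi.mulSingle (⟨k - 1, by have := hk; omega⟩ : Fin k)
      (Multiplicative.ofAdd (cor (Multiplicative.toAdd (x ⟨i.1, hi⟩))))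
  map_one' := by
    funext t
    by_cases ht : t = ⟨k - 1, by have := hk; omega⟩
    · subst ht
      simp
    · have ht' : (t : ℕ) < k - 1 := by
        have h1 := t.2
        have h2 : (t : ℕ) ≠ k - 1 := fun h => ht (Fin.ext h)
        omega
      simp [Pi.mulSingle_eq_of_ne ht, ht']
  map_mul' x y := by
    funext t
    by_cases ht : t = ⟨k - 1, by have := hk; omega⟩
    · subst ht
      have h2 : ¬ ((k - 1 : ℕ) < k - 1) := by omega
      simp only [Pi.mul_apply, dif_neg h2, Pi.mulSingle_eq_same, one_mul]
      rw [← ofAdd_add, ← map_add]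
      rfl
    · have ht' : (t : ℕ) < k - 1 := by
        have h1 := t.2
        have h2 : (t : ℕ) ≠ k - 1 := fun h => ht (Fin.ext h)
        omega
      simp [Pi.mulSingle_eq_of_ne ht, ht']

theorem phi_apply (k : ℕ) (hk : 2 ≤ k) (n : Fin k → ℕ) (i : Fin k) (hi : (i : ℕ) < k - 1)
    (cor : ZMod (n i) →+ ZMod (n ⟨k - 1, by have := hk; omega⟩))
    (x : ∀ j : Fin (k - 1), Multiplicative (ZMod (n (Fin.castLE (by have := hk; omega) j)))) (t : Fin k) :
    phi k hk n i hi cor x t = (if h : (t : ℕ) < k - 1 then x ⟨t.1, h⟩ else 1) *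
      (Pi.mulSingle (⟨k - 1, by have := hk; omega⟩ : Fin k)
        (Multiplicative.ofAdd (cor (Multiplicative.toAdd (x ⟨i.1, hi⟩)))) : IG k n) t := rfl

theorem phi_single_ne (k : ℕ) (hk : 2 ≤ k) (n : Fin k → ℕ) (i : Fin k) (hi : (i : ℕ) < k - 1)
    (cor : ZMod (n i) →+ ZMod (n ⟨k - 1, by have := hk; omega⟩)) (j : Fin (k - 1))
    (hj : Fin.castLE (by have := hk; omega : k - 1 ≤ k) j ≠ i)
    (c : Multiplicative (ZMod (n (Fin.castLE (by have := hk; omega) j)))) :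
    phi k hk n i hi cor (Pi.mulSingle j c) = Pi.mulSingle (Fin.castLE (by omega) j) c := by
  have hk1 : k - 1 ≤ k := by omega
  have hji : j ≠ (⟨i.1, hi⟩ : Fin (k - 1)) := by
    intro h
    exact hj (by rw [h]; exact Fin.ext rfl)
  funext t
  rw [phi_apply, Pi.mulSingle_eq_of_ne hji.symm]
  simp only [toAdd_one, map_zero, ofAdd_zero]
  rcases t with ⟨tv, htk⟩
  by_cases htv : tv < k - 1
  · rw [dif_pos htv]
    have hne : (⟨tv, htk⟩ : Fin k) ≠ ⟨k - 1, by have := hk; omega⟩ := by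
      simp only [ne_eq, Fin.mk.injEq]
      omega
    rw [Pi.mulSingle_eq_of_ne hne, mul_one]
    by_cases hv : tv = (j : ℕ)
    · subst hv
      exact (Pi.mulSingle_eq_same
          (M := fun j : Fin (k - 1) => Multiplicative (ZMod (n (Fin.castLE hk1 j)))) j c).trans
        (Pi.mulSingle_eq_same (M := fun t : Fin k => Multiplicative (ZMod (n t)))
          (Fin.castLE hk1 j) c).symm
    · have h1 : (⟨tv, htv⟩ : Fin (k - 1)) ≠ j := fun h => hv (congrArg Fin.val h)
      have h2 : (⟨tv, htk⟩ : Fin k) ≠ Fin.castLE hk1 j := fun h => hv (congrArg Fin.val h)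
      rw [Pi.mulSingle_eq_of_ne h1, Pi.mulSingle_eq_of_ne h2]
  · rw [dif_neg htv, one_mul]
    have hv : tv = k - 1 := by omega
    subst hv
    have h2 : (⟨k - 1, htk⟩ : Fin k) ≠ Fin.castLE hk1 j := by
      intro h
      have h3 : k - 1 = (j : ℕ) := congrArg Fin.val h
      have := j.2
      omega
    rw [Pi.mulSingle_eq_of_ne h2]
    exact Pi.mulSingle_eq_same _ _

theorem phi_single_i (k : ℕ) (hk : 2 ≤ k) (n : Fin k → ℕ) (i : Fin k) (hi : (i : ℕ) < k - 1)
    (cor : ZMod (n i) →+ ZMod (n ⟨k - 1, by have := hk; omega⟩)) (c : Multiplicative (ZMod (n i))) :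
    phi k hk n i hi cor (Pi.mulSingle ⟨i.1, hi⟩ c) =
      Pi.mulSingle i c *
        Pi.mulSingle (⟨k - 1, by have := hk; omega⟩ : Fin k)
          (Multiplicative.ofAdd (cor (Multiplicative.toAdd c))) := by
  have hk1 : k - 1 ≤ k := by omega
  funext t
  rw [phi_apply, Pi.mul_apply]
  have hsame : (Pi.mulSingle (⟨i.1, hi⟩ : Fin (k - 1)) c :
      ∀ j : Fin (k - 1), Multiplicative (ZMod (n (Fin.castLE hk1 j)))) ⟨i.1, hi⟩ = c :=
    Pi.mulSingle_eq_same
      (M := fun j : Fin (k - 1) => Multiplicative (ZMod (n (Fin.castLE hk1 j))))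
      (⟨i.1, hi⟩ : Fin (k - 1)) c
  rw [hsame]
  rcases t with ⟨tv, htk⟩
  by_cases htv : tv < k - 1
  · rw [dif_pos htv]
    have hne : (⟨tv, htk⟩ : Fin k) ≠ ⟨k - 1, by have := hk; omega⟩ := by
      simp only [ne_eq, Fin.mk.injEq]
      omega
    simp only [Pi.mulSingle_eq_of_ne hne, mul_one]
    by_cases hv : tv = (i : ℕ)
    · subst hv
      exact (Pi.mulSingle_eq_same
          (M := fun j : Fin (k - 1) => Multiplicative (ZMod (n (Fin.castLE hk1 j))))
          (⟨(i : ℕ), hi⟩ : Fin (k - 1)) c).trans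
        (Pi.mulSingle_eq_same (M := fun t : Fin k => Multiplicative (ZMod (n t))) i c).symm
    · have h1 : (⟨tv, htv⟩ : Fin (k - 1)) ≠ ⟨i.1, hi⟩ := fun h => hv (congrArg Fin.val h)
      have h2 : (⟨tv, htk⟩ : Fin k) ≠ i := fun h => hv (congrArg Fin.val h)
      rw [Pi.mulSingle_eq_of_ne h1, Pi.mulSingle_eq_of_ne h2]
  · rw [dif_neg htv, one_mul]
    have hv : tv = k - 1 := by omega
    subst hv
    have h2 : (⟨k - 1, htk⟩ : Fin k) ≠ i := by
      intro h
      have h3 : k - 1 = (i : ℕ) := congrArg Fin.val h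
      omega
    rw [Pi.mulSingle_eq_of_ne h2, one_mul]

theorem phi_inj (k : ℕ) (hk : 2 ≤ k) (n : Fin k → ℕ) (i : Fin k) (hi : (i : ℕ) < k - 1)
    (cor : ZMod (n i) →+ ZMod (n ⟨k - 1, by have := hk; omega⟩)) :
    Function.Injective (phi k hk n i hi cor) := by
  have hk1 : k - 1 ≤ k := by omega
  rw [injective_iff_map_eq_one]
  intro x hx
  funext j
  have h := congrFun hx (Fin.castLE hk1 j)
  rw [phi_apply] at h
  have hlt : ((Fin.castLE hk1 j : Fin k) : ℕ) < k - 1 := j.2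
  rw [dif_pos hlt] at h
  have hne : (Fin.castLE hk1 j : Fin k) ≠ ⟨k - 1, by have := hk; omega⟩ := by
    intro hq
    have h3 : (j : ℕ) = k - 1 := congrArg Fin.val hq
    have := j.2
    omega
  rw [Pi.mulSingle_eq_of_ne hne, mul_one] at h
  exact h

theorem stmt_9 (k : ℕ) (hk : 2 ≤ k) (n : Fin k → ℕ)
    (h1 : ∀ i, 1 < n i) (hdvd : ∀ i j : Fin k, i ≤ j → n i ∣ n j)
    (i : Fin k) (hi : (i : ℕ) < k - 1) :
    Nonempty ((Subgroup.closure
        ((fun j : Fin k => if j = i then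
            gen k n i * gen k n ⟨k - 1, by omega⟩ ^ (n ⟨k - 1, by omega⟩ / n i)
          else gen k n j) '' {j : Fin k | (j : ℕ) < k - 1})) ≃*
      (∀ j : Fin (k - 1), Multiplicative (ZMod (n (Fin.castLE (by omega) j))))) := by
  have hk1 : k - 1 ≤ k := by omega
  set L : Fin k := ⟨k - 1, by omega⟩ with hL
  have hle : i ≤ L := by
    rw [Fin.le_def]
    exact Nat.le_of_lt hi
  have hd : n i ∣ n L := hdvd i L hle
  set q : ℕ := n L / n i with hq
  -- the correction hom
  have hcor0 : ((q • Int.castAddHom (ZMod (n L))) : ℤ →+ ZMod (n L)) ((n i : ℕ) : ℤ) = 0 := by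
    simp only [AddMonoidHom.nsmul_apply, Int.coe_castAddHom, Int.cast_natCast]
    rw [nsmul_eq_mul, ← Nat.cast_mul, Nat.div_mul_cancel hd, ZMod.natCast_self]
  set cor : ZMod (n i) →+ ZMod (n L) :=
    ZMod.lift (n i) ⟨q • Int.castAddHom (ZMod (n L)), hcor0⟩ with hcorDef
  have hcor1 : cor 1 = (q : ZMod (n L)) := by
    have : ((1 : ℤ) : ZMod (n i)) = 1 := Int.cast_one
    rw [← this, hcorDef, ZMod.lift_coe]
    simp [nsmul_eq_mul]
  set B : Fin k → IG k n := fun j : Fin k => if j = i then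
      gen k n i * gen k n L ^ q else gen k n j with hB
  -- claim 1
  have claim1 : ∀ j : Fin (k - 1),
      phi k hk n i hi cor (Pi.mulSingle j (Multiplicative.ofAdd 1)) = B (Fin.castLE hk1 j) := by
    intro j
    by_cases hji : Fin.castLE hk1 j = i
    · have hj' : j = (⟨i.1, hi⟩ : Fin (k - 1)) :=
        Fin.ext (show (j : ℕ) = (i : ℕ) from congrArg Fin.val hji)
      subst hj'
      rw [phi_single_i, hB]
      simp only [if_pos hji]
      have hpow : gen k n L ^ q = Pi.mulSingle L (Multiplicative.ofAdd (q : ZMod (n L))) := by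
        rw [← Pi.mulSingle_pow, ← ofAdd_nsmul, nsmul_eq_mul, mul_one]
      rw [hpow]
      refine congrArg₂ _ rfl ?_
      refine congrArg _ ?_
      exact congrArg Multiplicative.ofAdd hcor1
    · rw [phi_single_ne k hk n i hi cor j hji, hB]
      simp only [if_neg hji]
  -- claim 2 : single powers
  have claim2 : ∀ (j : Fin (k - 1)) (y : Multiplicative (ZMod (n (Fin.castLE hk1 j)))),
      (Pi.mulSingle j y : ∀ j : Fin (k - 1), Multiplicative (ZMod (n (Fin.castLE hk1 j)))) =
        (Pi.mulSingle j (Multiplicative.ofAdd (1 : ZMod (n (Fin.castLE hk1 j))))) ^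
          (Multiplicative.toAdd y).val := by
    intro j y
    haveI : NeZero (n (Fin.castLE hk1 j)) := ⟨by have := h1 (Fin.castLE hk1 j); omega⟩
    rw [← Pi.mulSingle_pow, ← ofAdd_nsmul, nsmul_eq_mul, mul_one,
      ZMod.natCast_rightInverse (Multiplicative.toAdd y), ofAdd_toAdd]
  have hrange : (phi k hk n i hi cor).range =
      Subgroup.closure (B '' {j : Fin k | (j : ℕ) < k - 1}) := by
    apply le_antisymm
    · rintro y ⟨x, rfl⟩
      rw [← Finset.univ_prod_mulSingle x, map_prod]
      apply Subgroup.prod_mem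
      intro j _
      rw [claim2 j (x j), map_pow]
      apply pow_mem
      apply Subgroup.subset_closure
      exact ⟨Fin.castLE hk1 j, j.2, (claim1 j).symm⟩
    · rw [Subgroup.closure_le]
      rintro y ⟨j, hj, rfl⟩
      exact ⟨Pi.mulSingle ⟨j.1, hj⟩ (Multiplicative.ofAdd 1), claim1 ⟨j.1, hj⟩⟩
  exact ⟨((MulEquiv.subgroupCongr hrange).symm.trans
    (MonoidHom.ofInjective (phi_inj k hk n i hi cor)).symm)⟩
end
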